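/- arXiv:2603.21254 — 8 statements merged into one kernel-verified Lean document; each statement's English description precedes it below -/
import Mathlib

section
/- Let r be a positive natural number and let K, R, Q be r×r real matrices such that K is skew-symmetric (Kᵀ = -K), R is symmetric positive definite, and Q is symmetric positive definite. Then the matrix A = (K - R) * Q is Hurwitz: every eigenvalue μ ∈ ℂ of the complexification of A (the matrix obtained by mapping each real entry of A into ℂ) satisfies Re μ < 0. -/
open Matrix
open scoped ComplexOrder

lemma map_conjTranspose_real {n : Type*} [Fintype n] (M : Matrix n n ℝ) :
    (M.map (algebraMap ℝ ℂ))ᴴ = Mᵀ.map (algebraMap ℝ ℂ) := by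
  ext i j
  simp [conjTranspose_apply, Matrix.map_apply, Complex.conj_ofReal]

lemma posDef_map_complex {n : Type*} [Fintype n] [DecidableEq n] {P : Matrix n n ℝ}
    (hP : P.PosDef) : (P.map (algebraMap ℝ ℂ)).PosDef := by
  obtain ⟨B, hB⟩ : ∃ B : Matrix n n ℝ, P = Bᴴ * B := by
    open scoped MatrixOrder in
    exact ⟨CFC.sqrt P, by
      rw [(CFC.sqrt_nonneg P).posSemidef.isHermitian.eq,
        CFC.sqrt_mul_sqrt_self P hP.posSemidef.nonneg]⟩
  have hBdet : B.det ≠ 0 := by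
    intro h
    have : P.det = 0 := by
      rw [hB, det_mul, det_conjTranspose, h]; simp
    exact (ne_of_gt hP.det_pos) this
  set Bc := B.map (algebraMap ℝ ℂ) with hBc
  have hmap : P.map (algebraMap ℝ ℂ) = Bcᴴ * Bc := by
    rw [hB, Matrix.map_mul, hBc, map_conjTranspose_real]
    congr 1
  have hBcdet : Bc.det ≠ 0 := by
    have : Bc.det = algebraMap ℝ ℂ B.det := by
      rw [hBc, ← RingHom.mapMatrix_apply, ← RingHom.map_det]
    rw [this]
    simpa using hBdet
  have hinj : Function.Injective (Bc.mulVec) :=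
    mulVec_injective_iff_isUnit.mpr ((isUnit_iff_isUnit_det Bc).mpr hBcdet.isUnit)
  rw [hmap]
  refine .of_dotProduct_mulVec_pos (isHermitian_conjTranspose_mul_self _) fun x hx => ?_
  rw [← mulVec_mulVec, dotProduct_mulVec, vecMul_conjTranspose, star_star]
  have hw : Bc *ᵥ x ≠ 0 := fun h => hx (hinj (by simpa using h))
  exact lt_of_le_of_ne (dotProduct_star_self_nonneg _)
    (fun h => hw (dotProduct_star_self_eq_zero.mp h.symm))

/-- Proposition 1 (Lemma 2 in Gillis–Sharma), sufficiency direction: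
if `K` is skew-symmetric, `R` is symmetric positive definite, and `Q` is
symmetric positive definite, then `A = (K - R) * Q` is Hurwitz. -/
theorem stmt0 (r : ℕ) (hr : 0 < r) (K R Q : Matrix (Fin r) (Fin r) ℝ)
    (hK : Kᵀ = -K) (hR : R.PosDef) (hQ : Q.PosDef) :
    ∀ μ ∈ spectrum ℂ (((K - R) * Q).map (algebraMap ℝ ℂ)), μ.re < 0 := by
  intro μ hμ
  set f := algebraMap ℝ ℂ
  set Kc := K.map f with hKc
  set Rc := R.map f with hRc
  set Qc := Q.map f with hQc
  have hmap : ((K - R) * Q).map f = (Kc - Rc) * Qc := by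
    rw [Matrix.map_mul, Matrix.map_sub _ (map_sub f)]
  have hev : Module.End.HasEigenvalue (Matrix.toLinAlgEquiv' (((K - R) * Q).map f)) μ := by
    apply Module.End.hasEigenvalue_iff_mem_spectrum.mpr
    rwa [AlgEquiv.spectrum_eq]
  obtain ⟨v, hv⟩ := hev.exists_hasEigenvector
  have hvne : v ≠ 0 := hv.right
  have hA : ((K - R) * Q).map f *ᵥ v = μ • v := by
    have := hv.apply_eq_smul
    rwa [Matrix.toLinAlgEquiv'_apply] at this
  rw [hmap, ← mulVec_mulVec] at hA
  set y := Qc *ᵥ v with hy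
  have hQcP : Qc.PosDef := posDef_map_complex hQ
  have hRcP : Rc.PosDef := posDef_map_complex hR
  have hyne : y ≠ 0 := by
    intro h
    apply hvne
    have hinj : Function.Injective (Qc.mulVec) :=
      mulVec_injective_iff_isUnit.mpr ((isUnit_iff_isUnit_det Qc).mpr hQcP.det_pos.ne'.isUnit)
    exact hinj (by simpa using h)
  set s := star v ⬝ᵥ (Qc *ᵥ v) with hs
  have hspos : 0 < s := hQcP.dotProduct_mulVec_pos hvne
  set t := star y ⬝ᵥ (Rc *ᵥ y) with ht
  have htpos : 0 < t := hRcP.dotProduct_mulVec_pos hyne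
  have hyv : star y ⬝ᵥ v = s := by
    rw [hy, star_mulVec, ← dotProduct_mulVec, hQcP.isHermitian.eq]
  set u := star y ⬝ᵥ (Kc *ᵥ y) with hu
  have hKcH : Kcᴴ = -Kc := by
    rw [hKc, map_conjTranspose_real, hK]
    ext i j
    simp [Matrix.map_apply, f]
  have hure : u.re = 0 := by
    have hconj : star u = -u := by
      conv_lhs => rw [hu, star_dotProduct, star_star]
      rw [star_mulVec, ← dotProduct_mulVec, hKcH, neg_mulVec, dotProduct_neg, hu]
    have := congrArg Complex.re hconj
    simp only [Complex.star_def, Complex.conj_re, Complex.neg_re] at this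
    linarith
  have hmain : u - t = μ * s := by
    have h1 : star y ⬝ᵥ ((Kc - Rc) *ᵥ y) = star y ⬝ᵥ (μ • v) := by rw [hA]
    rw [sub_mulVec, dotProduct_sub, dotProduct_smul, hyv, smul_eq_mul] at h1
    rw [hu, ht]
    exact h1
  have hs_im : s.im = 0 := by
    have := hspos
    rw [Complex.lt_def] at this
    simpa using this.2.symm
  have hs_re : 0 < s.re := by
    have := hspos
    rw [Complex.lt_def] at this
    simpa using this.1
  have ht_re : 0 < t.re := by
    have := htpos
    rw [Complex.lt_def] at this
    simpa using this.1
  have hre : -t.re = μ.re * s.re := by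
    have := congrArg Complex.re hmain
    simp only [Complex.sub_re, Complex.mul_re, hure, hs_im, mul_zero, sub_zero, zero_sub] at this
    linarith
  nlinarith
end

section
/- Let r be a positive natural number and let K, R, Q be r×r real matrices such that K is skew-symmetric (Kᵀ = -K), R is symmetric positive semi-definite, and Q is symmetric positive definite. Then every eigenvalue μ ∈ ℂ of the complexification of A = (K - R) * Q satisfies Re μ ≤ 0. -/
open Matrix

private lemma re_quad {r : ℕ} (M : Matrix (Fin r) (Fin r) ℝ) (v : Fin r → ℂ) :
    (dotProduct (star v) ((M.map (algebraMap ℝ ℂ)) *ᵥ v)).re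
      = dotProduct (fun i => (v i).re) (M *ᵥ fun i => (v i).re)
        + dotProduct (fun i => (v i).im) (M *ᵥ fun i => (v i).im) := by
  simp only [dotProduct, mulVec, Pi.star_apply, map_apply, Finset.mul_sum,
    Complex.re_sum, Complex.mul_re, Complex.conj_re, Complex.conj_im]
  rw [← Finset.sum_add_distrib]
  refine Finset.sum_congr rfl fun i _ => ?_
  rw [← Finset.sum_add_distrib]
  refine Finset.sum_congr rfl fun j _ => ?_
  simp [Complex.mul_re]

private lemma im_quad {r : ℕ} (M : Matrix (Fin r) (Fin r) ℝ) (v : Fin r → ℂ) :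
    (dotProduct (star v) ((M.map (algebraMap ℝ ℂ)) *ᵥ v)).im
      = dotProduct (fun i => (v i).re) (M *ᵥ fun i => (v i).im)
        - dotProduct (fun i => (v i).im) (M *ᵥ fun i => (v i).re) := by
  simp only [dotProduct, mulVec, Pi.star_apply, map_apply, Finset.mul_sum,
    Complex.im_sum, Complex.mul_im, Complex.conj_re, Complex.conj_im]
  rw [← Finset.sum_sub_distrib]
  refine Finset.sum_congr rfl fun i _ => ?_
  rw [← Finset.sum_sub_distrib]
  refine Finset.sum_congr rfl fun j _ => ?_
  simp [Complex.mul_im]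
  ring

private lemma skew_quad {r : ℕ} {K : Matrix (Fin r) (Fin r) ℝ} (hK : Kᵀ = -K)
    (x : Fin r → ℝ) : dotProduct x (K *ᵥ x) = 0 := by
  have h : dotProduct x (K *ᵥ x) = - dotProduct x (K *ᵥ x) := by
    conv_lhs => rw [Matrix.dotProduct_mulVec, ← Matrix.mulVec_transpose, hK]
    simp [Matrix.neg_mulVec, dotProduct_comm]
  linarith

/-- If `K` is skew-symmetric, `R` is symmetric positive semi-definite, and `Q` is
symmetric positive definite, then every eigenvalue of the complexification of
`A = (K - R) * Q` has nonpositive real part. -/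
theorem stmt1 (r : ℕ) (hr : 0 < r) (K R Q : Matrix (Fin r) (Fin r) ℝ)
    (hK : Kᵀ = -K) (hR : R.PosSemidef) (hQ : Q.PosDef) :
    ∀ μ ∈ spectrum ℂ (((K - R) * Q).map (algebraMap ℝ ℂ)), μ.re ≤ 0 := by
  intro μ hμ
  set φ := algebraMap ℝ ℂ
  set M := ((K - R) * Q).map φ with hM
  -- get an eigenvector
  have hspec : spectrum ℂ M = spectrum ℂ (Matrix.toLinAlgEquiv' M) :=
    (AlgEquiv.spectrum_eq Matrix.toLinAlgEquiv' M).symm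
  rw [hspec] at hμ
  have heig : Module.End.HasEigenvalue (Matrix.toLinAlgEquiv' M) μ :=
    Module.End.HasEigenvalue.of_mem_spectrum hμ
  obtain ⟨v, hv⟩ := heig.exists_hasEigenvector
  have hv0 : v ≠ 0 := hv.right
  have hmv : M *ᵥ v = μ • v := by
    have h := hv.apply_eq_smul
    rwa [Matrix.toLinAlgEquiv'_apply] at h
  -- set w = Qℂ v
  set w : Fin r → ℂ := (Q.map φ) *ᵥ v with hw
  have hsplit : M = ((K - R).map φ) * (Q.map φ) := by
    rw [hM, ← Matrix.map_mul]
  have hKRw : ((K - R).map φ) *ᵥ w = μ • v := by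
    rw [hw, Matrix.mulVec_mulVec, ← hsplit, hmv]
  -- q := star v ⬝ᵥ Qℂ v
  set q : ℂ := dotProduct (star v) ((Q.map φ) *ᵥ v) with hq
  -- star w ⬝ᵥ v = q  (using symmetry of Q)
  have hQsymm : Qᵀ = Q := hQ.isHermitian
  have hH : (Q.map φ)ᴴ = Q.map φ :=
    hQ.isHermitian.map φ fun a => by simp [φ]
  have hwv : dotProduct (star w) v = q := by
    rw [hw, hq, Matrix.star_mulVec, ← Matrix.dotProduct_mulVec, hH]
  -- key equation
  have hkey : dotProduct (star w) (((K - R).map φ) *ᵥ w) = μ * q := by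
    rw [hKRw, dotProduct_smul, smul_eq_mul, hwv]
  -- real/imaginary parts of q
  set x : Fin r → ℝ := fun i => (v i).re with hx
  set y : Fin r → ℝ := fun i => (v i).im with hy
  have hqre : q.re = dotProduct x (Q *ᵥ x) + dotProduct y (Q *ᵥ y) := re_quad Q v
  have hqim : q.im = 0 := by
    rw [hq, im_quad Q v]
    have : dotProduct x (Q *ᵥ y) = dotProduct y (Q *ᵥ x) := by
      rw [Matrix.dotProduct_mulVec, ← Matrix.mulVec_transpose, hQsymm,
        dotProduct_comm]
    rw [this]; ring
  have hqpos : 0 < q.re := by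
    rw [hqre]
    have hx0ory0 : x ≠ 0 ∨ y ≠ 0 := by
      by_contra h
      push_neg at h
      apply hv0
      funext i
      have h1 : x i = 0 := by rw [h.1]; rfl
      have h2 : y i = 0 := by rw [h.2]; rfl
      exact Complex.ext h1 h2
    have hxq : 0 ≤ dotProduct x (Q *ᵥ x) := by
      simpa using hQ.posSemidef.dotProduct_mulVec_nonneg x
    have hyq : 0 ≤ dotProduct y (Q *ᵥ y) := by
      simpa using hQ.posSemidef.dotProduct_mulVec_nonneg y
    rcases hx0ory0 with h | h
    · have := hQ.dotProduct_mulVec_pos h; simp at this; linarith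
    · have := hQ.dotProduct_mulVec_pos h; simp at this; linarith
  -- real part of star w ⬝ᵥ (K-R)ℂ w is ≤ 0
  set a : Fin r → ℝ := fun i => (w i).re with ha
  set b : Fin r → ℝ := fun i => (w i).im with hb
  have hnum : (dotProduct (star w) (((K - R).map φ) *ᵥ w)).re
      = - (dotProduct a (R *ᵥ a) + dotProduct b (R *ᵥ b)) := by
    rw [re_quad (K - R) w]
    simp only [Matrix.sub_mulVec, dotProduct_sub]
    rw [skew_quad hK a, skew_quad hK b]
    ring
  have hRa : 0 ≤ dotProduct a (R *ᵥ a) := by simpa using hR.dotProduct_mulVec_nonneg a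
  have hRb : 0 ≤ dotProduct b (R *ᵥ b) := by simpa using hR.dotProduct_mulVec_nonneg b
  have hle : (μ * q).re ≤ 0 := by
    rw [← hkey, hnum]; linarith
  rw [Complex.mul_re, hqim, mul_zero, sub_zero] at hle
  nlinarith [hle, hqpos]
end

section
/- Let r be a positive natural number and let A be an r×r real matrix that is Hurwitz, i.e., every eigenvalue μ ∈ ℂ of the complexification of A satisfies Re μ < 0. Then there exist r×r real matrices K, R, Q with K skew-symmetric (Kᵀ = -K), R symmetric positive definite, and Q symmetric positive definite, such that A = (K - R) * Q. -/
open Matrix MeasureTheory Filter Set NormedSpace Topology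
open scoped Nat

attribute [local instance] Matrix.linftyOpNormedAddCommGroup Matrix.linftyOpNormedRing
  Matrix.linftyOpNormedAlgebra Matrix.linftyOpNormedSpace
attribute [-instance] instTopologicalSpaceMatrix Matrix.instUniformSpace

section aux

variable {r : ℕ}

/-- mulVec by a fixed vector, as an ℝ-linear map on complex matrices. -/
noncomputable def mulVecLinR (v : Fin r → ℂ) :
    Matrix (Fin r) (Fin r) ℂ →ₗ[ℝ] (Fin r → ℂ) where
  toFun M := M *ᵥ v
  map_add' M N := Matrix.add_mulVec M N v
  map_smul' c M := Matrix.smul_mulVec c M v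

lemma exp_smul_one (c : ℂ) :
    exp (c • (1 : Matrix (Fin r) (Fin r) ℂ)) = Complex.exp c • 1 := by
  have h1 : c • (1 : Matrix (Fin r) (Fin r) ℂ) = algebraMap ℂ _ c :=
    (Algebra.algebraMap_eq_smul_one c).symm
  rw [h1, ← map_exp (algebraMap ℂ (Matrix (Fin r) (Fin r) ℂ)) (continuous_algebraMap _ _)]
  rw [show (exp c : ℂ) = Complex.exp c by
    rw [Complex.exp_eq_exp_ℂ]]
  exact (Algebra.algebraMap_eq_smul_one _)

end aux

section decay

variable {r : ℕ}

lemma exp_mulVec_eq (B : Matrix (Fin r) (Fin r) ℂ) (μ : ℂ) (v : Fin r → ℂ) (k : ℕ)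
    (hk : ((B - μ • 1) ^ k) *ᵥ v = 0) (t : ℝ) :
    exp (t • B) *ᵥ v = Complex.exp (t • μ) •
      ∑ n ∈ Finset.range k, (((n ! : ℝ))⁻¹ * t ^ n) • ((B - μ • 1) ^ n *ᵥ v) := by
  set N := B - μ • 1 with hN
  have hsplit : t • B = t • (μ • (1 : Matrix (Fin r) (Fin r) ℂ)) + t • N := by
    rw [← smul_add, hN]; congr 1; abel
  have hcomm : Commute (t • (μ • (1 : Matrix (Fin r) (Fin r) ℂ))) (t • N) := by
    apply Commute.smul_left
    apply Commute.smul_right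
    apply Commute.smul_left
    exact Commute.one_left N
  rw [hsplit, exp_add_of_commute hcomm]
  have h1 : t • (μ • (1 : Matrix (Fin r) (Fin r) ℂ)) = (t • μ) • 1 := by
    rw [smul_assoc]
  rw [h1, exp_smul_one, smul_mul_assoc, one_mul, Matrix.smul_mulVec]
  congr 1
  -- expand exp (t • N) *ᵥ v as a finite sum
  have hsum : Summable fun n : ℕ => ((n !)⁻¹ : ℝ) • (t • N) ^ n :=
    expSeries_summable' (𝕂 := ℝ) (t • N)
  have := ((mulVecLinR v).toContinuousLinearMap).map_tsum hsum
  have hexp : exp (t • N) = ∑' n : ℕ, ((n !)⁻¹ : ℝ) • (t • N) ^ n := by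
    rw [exp_eq_tsum ℝ]
  rw [hexp]
  have happ : (mulVecLinR v).toContinuousLinearMap (∑' n : ℕ, ((n !)⁻¹ : ℝ) • (t • N) ^ n)
      = ∑' n : ℕ, (mulVecLinR v).toContinuousLinearMap (((n !)⁻¹ : ℝ) • (t • N) ^ n) := this
  have hfun : ∀ n : ℕ, (mulVecLinR v).toContinuousLinearMap (((n !)⁻¹ : ℝ) • (t • N) ^ n)
      = (((n ! : ℝ))⁻¹ * t ^ n) • (N ^ n *ᵥ v) := by
    intro n
    rw [_root_.map_smul]
    have : (t • N) ^ n = t ^ n • N ^ n := smul_pow t N n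
    rw [this, _root_.map_smul]
    show ((n ! : ℝ))⁻¹ • t ^ n • (N ^ n *ᵥ v) = _
    rw [smul_smul]
  have hzero : ∀ n ∉ Finset.range k, (((n ! : ℝ))⁻¹ * t ^ n) • (N ^ n *ᵥ v) = 0 := by
    intro n hn
    rw [Finset.mem_range, not_lt] at hn
    have : N ^ n *ᵥ v = 0 := by
      have : N ^ n = N ^ (n - k) * N ^ k := by rw [← pow_add]; congr 1; omega
      rw [this, ← Matrix.mulVec_mulVec, hk, Matrix.mulVec_zero]
    rw [this, smul_zero]
  calc (mulVecLinR v).toContinuousLinearMap (∑' n : ℕ, ((n !)⁻¹ : ℝ) • (t • N) ^ n)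
      = ∑' n : ℕ, (((n ! : ℝ))⁻¹ * t ^ n) • (N ^ n *ᵥ v) := by
        rw [happ]; exact tsum_congr hfun
    _ = ∑ n ∈ Finset.range k, (((n ! : ℝ))⁻¹ * t ^ n) • (N ^ n *ᵥ v) := tsum_eq_sum hzero

end decay

section vecdecay

variable {r : ℕ}

lemma vec_decay (B : Matrix (Fin r) (Fin r) ℂ) {ε : ℝ} (hε : 0 < ε)
    (hspec : ∀ μ ∈ spectrum ℂ B, μ.re ≤ -(2 * ε)) (v : Fin r → ℂ) :
    ∃ C : ℝ, ∀ t : ℝ, 0 ≤ t → ‖exp (t • B) *ᵥ v‖ ≤ C * Real.exp (-ε * t) := by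
  set S : Submodule ℂ (Fin r → ℂ) :=
    { carrier := {w | ∃ C : ℝ, ∀ t : ℝ, 0 ≤ t → ‖exp (t • B) *ᵥ w‖ ≤ C * Real.exp (-ε * t)}
      add_mem' := by
        rintro w₁ w₂ ⟨C₁, h₁⟩ ⟨C₂, h₂⟩
        refine ⟨C₁ + C₂, fun t ht => ?_⟩
        rw [Matrix.mulVec_add, add_mul]
        exact (norm_add_le _ _).trans (add_le_add (h₁ t ht) (h₂ t ht))
      zero_mem' := ⟨0, fun t ht => by simp [Matrix.mulVec_zero]⟩
      smul_mem' := by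
        rintro c w ⟨C, h⟩
        refine ⟨‖c‖ * C, fun t ht => ?_⟩
        rw [Matrix.mulVec_smul, norm_smul, mul_assoc]
        exact mul_le_mul_of_nonneg_left (h t ht) (norm_nonneg c) } with hS
  suffices hv : v ∈ S by exact hv
  have htop := Module.End.iSup_maxGenEigenspace_eq_top (Matrix.toLinAlgEquiv' B)
  have hle : ∀ μ : ℂ, Module.End.maxGenEigenspace (Matrix.toLinAlgEquiv' B) μ ≤ S := by
    intro μ w hw
    rcases eq_or_ne w 0 with rfl | hw0
    · exact S.zero_mem
    obtain ⟨k, hk⟩ := (Module.End.mem_maxGenEigenspace _ _ _).mp hw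
    -- translate to matrix
    have hkM : ((B - μ • 1) ^ k) *ᵥ w = 0 := by
      have h0 : (Matrix.toLinAlgEquiv' ((B - μ • 1) ^ k)) w = 0 := by
        have he : Matrix.toLinAlgEquiv' ((B - μ • 1) ^ k)
            = (Matrix.toLinAlgEquiv' B - μ • 1) ^ k := by
          rw [map_pow, map_sub, _root_.map_smul, _root_.map_one]
        rw [he]
        exact hk
      rw [Matrix.toLinAlgEquiv'_apply] at h0
      exact h0
    -- μ is in the spectrum
    have hk0 : k ≠ 0 := by
      rintro rfl
      simp only [pow_zero, Matrix.one_mulVec] at hkM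
      exact hw0 hkM
    have hμ : μ ∈ spectrum ℂ B := by
      have hgen : Module.End.HasGenEigenvalue (Matrix.toLinAlgEquiv' B) μ k := by
        rw [Module.End.HasGenEigenvalue]
        intro hbot
        apply hw0
        have hwmem : w ∈ Module.End.genEigenspace (Matrix.toLinAlgEquiv' B) μ k := by
          rw [Module.End.mem_genEigenspace]
          exact ⟨k, le_rfl, hk⟩
        rw [hbot] at hwmem
        simpa using hwmem
      have heig := Module.End.hasEigenvalue_of_hasGenEigenvalue hgen
      have hmem := heig.mem_spectrum
      rwa [AlgEquiv.spectrum_eq Matrix.toLinAlgEquiv' B] at hmem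
    have hre : μ.re ≤ -(2 * ε) := hspec μ hμ
    -- now the estimate
    set N := B - μ • 1 with hN
    refine ⟨∑ n ∈ Finset.range k, (ε ^ n)⁻¹ * ‖N ^ n *ᵥ w‖, fun t ht => ?_⟩
    rw [exp_mulVec_eq B μ w k hkM t, norm_smul]
    have hnorme : ‖Complex.exp (t • μ)‖ = Real.exp (t * μ.re) := by
      rw [Complex.norm_exp]
      congr 1
      simp [Complex.real_smul]
    rw [hnorme, Finset.sum_mul]
    refine le_trans (mul_le_mul_of_nonneg_left (norm_sum_le _ _) (Real.exp_nonneg _)) ?_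
    rw [Finset.mul_sum]
    apply Finset.sum_le_sum
    intro n hn
    rw [norm_smul]
    have h1 : ‖((n !)⁻¹ : ℝ) * t ^ n‖ = ((n !) : ℝ)⁻¹ * t ^ n := by
      rw [Real.norm_eq_abs, abs_of_nonneg (mul_nonneg (by positivity) (pow_nonneg ht n))]
    rw [h1]
    have hfacpos : (0 : ℝ) < (n ! : ℝ) := by positivity
    have hepos : (0 : ℝ) < ε ^ n := by positivity
    -- two elementary bounds
    have h2 : ε ^ n * t ^ n ≤ (n ! : ℝ) * Real.exp (ε * t) := by
      have hs : (ε * t) ^ n / (n ! : ℝ) ≤ Real.exp (ε * t) := by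
        refine le_trans ?_ (Real.sum_le_exp_of_nonneg (by positivity) (n + 1))
        exact Finset.single_le_sum (f := fun i => (ε * t) ^ i / (i ! : ℝ))
          (fun i _ => by positivity) (Finset.self_mem_range_succ n)
      rw [div_le_iff₀ hfacpos] at hs
      calc ε ^ n * t ^ n = (ε * t) ^ n := (mul_pow ε t n).symm
        _ ≤ Real.exp (ε * t) * (n ! : ℝ) := hs
        _ = (n ! : ℝ) * Real.exp (ε * t) := mul_comm _ _
    have h4 : ((n !) : ℝ)⁻¹ * t ^ n ≤ (ε ^ n)⁻¹ * Real.exp (ε * t) := by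
      have hmul := mul_le_mul_of_nonneg_left h2
        (by positivity : (0:ℝ) ≤ ((n !) : ℝ)⁻¹ * (ε ^ n)⁻¹)
      calc ((n !) : ℝ)⁻¹ * t ^ n
          = (((n !) : ℝ)⁻¹ * (ε ^ n)⁻¹) * (ε ^ n * t ^ n) := by
            field_simp
        _ ≤ (((n !) : ℝ)⁻¹ * (ε ^ n)⁻¹) * ((n ! : ℝ) * Real.exp (ε * t)) := hmul
        _ = (ε ^ n)⁻¹ * Real.exp (ε * t) := by
            field_simp
    have h3 : Real.exp (t * μ.re) ≤ Real.exp (-(2 * ε) * t) := by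
      apply Real.exp_le_exp.mpr
      calc t * μ.re ≤ t * (-(2 * ε)) := mul_le_mul_of_nonneg_left hre ht
        _ = -(2 * ε) * t := mul_comm _ _
    have hkey : Real.exp (t * μ.re) * (((n !) : ℝ)⁻¹ * t ^ n)
        ≤ (ε ^ n)⁻¹ * Real.exp (-ε * t) := by
      have hprod : Real.exp (-(2 * ε) * t) * ((ε ^ n)⁻¹ * Real.exp (ε * t))
          = (ε ^ n)⁻¹ * Real.exp (-ε * t) := by
        rw [show Real.exp (-ε * t) = Real.exp (-(2 * ε) * t) * Real.exp (ε * t) by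
          rw [← Real.exp_add]; congr 1; ring]
        ring
      calc Real.exp (t * μ.re) * (((n !) : ℝ)⁻¹ * t ^ n)
          ≤ Real.exp (-(2 * ε) * t) * ((ε ^ n)⁻¹ * Real.exp (ε * t)) :=
            mul_le_mul h3 h4 (by positivity) (Real.exp_nonneg _)
        _ = (ε ^ n)⁻¹ * Real.exp (-ε * t) := hprod
    calc Real.exp (t * μ.re) * ((((n !) : ℝ)⁻¹ * t ^ n) * ‖N ^ n *ᵥ w‖)
        = (Real.exp (t * μ.re) * (((n !) : ℝ)⁻¹ * t ^ n)) * ‖N ^ n *ᵥ w‖ := by ring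
      _ ≤ ((ε ^ n)⁻¹ * Real.exp (-ε * t)) * ‖N ^ n *ᵥ w‖ :=
          mul_le_mul_of_nonneg_right hkey (norm_nonneg _)
      _ = (ε ^ n)⁻¹ * ‖N ^ n *ᵥ w‖ * Real.exp (-ε * t) := by ring
  have hSt : (⊤ : Submodule ℂ (Fin r → ℂ)) ≤ S := by
    rw [← htop]
    exact iSup_le hle
  exact hSt trivial

end vecdecay

section matdecay

variable {r : ℕ}

lemma linfty_norm_le_sum (M : Matrix (Fin r) (Fin r) ℝ) :
    ‖M‖ ≤ ∑ i : Fin r, ∑ j : Fin r, ‖M i j‖ := by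
  have h : ‖M‖₊ ≤ ∑ i : Fin r, ∑ j : Fin r, ‖M i j‖₊ := by
    rw [Matrix.linfty_opNNNorm_def]
    refine Finset.sup_le fun i _ => ?_
    exact Finset.single_le_sum (f := fun i => ∑ j : Fin r, ‖M i j‖₊)
      (fun _ _ => by positivity) (Finset.mem_univ i)
  calc ‖M‖ = ((‖M‖₊ : ℝ)) := rfl
    _ ≤ ((∑ i : Fin r, ∑ j : Fin r, ‖M i j‖₊ : NNReal) : ℝ) := by exact_mod_cast h
    _ = ∑ i : Fin r, ∑ j : Fin r, ‖M i j‖ := by push_cast; rfl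

lemma matrix_decay (hr : 0 < r) (A : Matrix (Fin r) (Fin r) ℝ)
    (hA : ∀ μ ∈ spectrum ℂ (A.map (algebraMap ℝ ℂ)), μ.re < 0) :
    ∃ ε : ℝ, 0 < ε ∧ ∃ C : ℝ, 0 ≤ C ∧ ∀ t : ℝ, 0 ≤ t →
      ‖exp (t • A)‖ ≤ C * Real.exp (-ε * t) ∧
      ‖(exp (t • A))ᵀ‖ ≤ C * Real.exp (-ε * t) := by
  haveI : Nonempty (Fin r) := ⟨⟨0, hr⟩⟩
  set B := A.map (algebraMap ℝ ℂ) with hB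
  haveI : Nontrivial (Matrix (Fin r) (Fin r) ℂ) := by
    refine ⟨0, 1, fun h => ?_⟩
    have := congr_fun (congr_fun h ⟨0, hr⟩) ⟨0, hr⟩
    simp [Matrix.one_apply] at this
  obtain ⟨μ0, hμ0mem, hmax⟩ := (spectrum.isCompact (a := B)).exists_isMaxOn
    (spectrum.nonempty B) Complex.continuous_re.continuousOn
  set ε := -μ0.re / 2 with hde
  have hε : 0 < ε := by
    have := hA μ0 hμ0mem
    rw [hde]; linarith
  have hspec : ∀ μ ∈ spectrum ℂ B, μ.re ≤ -(2 * ε) := by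
    intro μ hμ
    have h : μ.re ≤ μ0.re := hmax hμ
    rw [hde]; linarith
  -- complexification commutes with exp
  have hmap : ∀ t : ℝ, (exp (t • A)).map (algebraMap ℝ ℂ) = exp (t • B) := by
    intro t
    let L : Matrix (Fin r) (Fin r) ℝ →ₗ[ℝ] Matrix (Fin r) (Fin r) ℂ :=
      { toFun := fun M => M.map (algebraMap ℝ ℂ)
        map_add' := fun M N => by ext i j; simp [Matrix.map_apply]
        map_smul' := fun c M => by ext i j; simp [Matrix.map_apply, Complex.real_smul, Complex.coe_algebraMap, mul_comm] }
    have hcont : Continuous (fun M : Matrix (Fin r) (Fin r) ℝ => M.map (algebraMap ℝ ℂ)) :=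
      L.continuous_of_finiteDimensional
    have hme := map_exp ((algebraMap ℝ ℂ).mapMatrix) hcont (t • A)
    have h1 : (algebraMap ℝ ℂ).mapMatrix (t • A) = t • B := by
      ext i j
      simp only [RingHom.mapMatrix_apply, Matrix.map_apply, Matrix.smul_apply, smul_eq_mul,
        hB, Complex.real_smul, Complex.coe_algebraMap]
      push_cast
      ring
    rw [h1] at hme
    calc (exp (t • A)).map (algebraMap ℝ ℂ)
        = (algebraMap ℝ ℂ).mapMatrix (exp (t • A)) := rfl
      _ = exp (t • B) := hme
  -- columnwise decay
  have hj : ∀ j : Fin r, ∃ C : ℝ, ∀ t : ℝ, 0 ≤ t →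
      ‖exp (t • B) *ᵥ Pi.single j 1‖ ≤ C * Real.exp (-ε * t) :=
    fun j => vec_decay B hε hspec (Pi.single j 1)
  choose Cf hCf using hj
  have hCf0 : ∀ j, 0 ≤ Cf j := by
    intro j
    have h := (norm_nonneg (exp ((0:ℝ) • B) *ᵥ Pi.single j 1)).trans (hCf j 0 le_rfl)
    simpa using h
  have hentry : ∀ t : ℝ, 0 ≤ t → ∀ i j, ‖(exp (t • A)) i j‖ ≤ Cf j * Real.exp (-ε * t) := by
    intro t ht i j
    have h1 : ((exp (t • A)) i j : ℂ) = (exp (t • B)) i j := by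
      rw [← hmap t]; simp [Matrix.map_apply]
    have h2 : (exp (t • B)) i j = (exp (t • B) *ᵥ Pi.single j 1) i := by
      simp [Matrix.mulVec_single]
    calc ‖(exp (t • A)) i j‖ = ‖((exp (t • A)) i j : ℂ)‖ := (Complex.norm_real _).symm
      _ = ‖(exp (t • B) *ᵥ Pi.single j 1) i‖ := by rw [h1, h2]
      _ ≤ ‖exp (t • B) *ᵥ Pi.single j 1‖ := norm_le_pi_norm _ i
      _ ≤ Cf j * Real.exp (-ε * t) := hCf j t ht
  refine ⟨ε, hε, (r : ℝ) * ∑ j : Fin r, Cf j,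
    mul_nonneg (by positivity) (Finset.sum_nonneg fun j _ => hCf0 j), fun t ht => ?_⟩
  have hsum : ∀ c : Fin r → ℝ, (∀ j, 0 ≤ c j) →
      (∑ i : Fin r, ∑ j : Fin r, c j * Real.exp (-ε * t))
        = ((r : ℝ) * ∑ j : Fin r, c j) * Real.exp (-ε * t) := by
    intro c _
    rw [Finset.sum_const, ← Finset.sum_mul]
    simp [Finset.card_univ, mul_assoc]
  constructor
  · calc ‖exp (t • A)‖ ≤ ∑ i : Fin r, ∑ j : Fin r, ‖(exp (t • A)) i j‖ :=
        linfty_norm_le_sum _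
      _ ≤ ∑ i : Fin r, ∑ j : Fin r, Cf j * Real.exp (-ε * t) :=
        Finset.sum_le_sum fun i _ => Finset.sum_le_sum fun j _ => hentry t ht i j
      _ = ((r : ℝ) * ∑ j : Fin r, Cf j) * Real.exp (-ε * t) := hsum Cf hCf0
  · calc ‖(exp (t • A))ᵀ‖ ≤ ∑ i : Fin r, ∑ j : Fin r, ‖(exp (t • A))ᵀ i j‖ :=
        linfty_norm_le_sum _
      _ ≤ ∑ i : Fin r, ∑ j : Fin r, Cf i * Real.exp (-ε * t) :=
        Finset.sum_le_sum fun i _ => Finset.sum_le_sum fun j _ => by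
          simpa [Matrix.transpose_apply] using hentry t ht j i
      _ = ∑ j : Fin r, ∑ i : Fin r, Cf i * Real.exp (-ε * t) := Finset.sum_comm
      _ = ((r : ℝ) * ∑ j : Fin r, Cf j) * Real.exp (-ε * t) := hsum Cf hCf0

end matdecay

/-- Proposition 1 (Lemma 2 in Gillis–Sharma), necessity direction:
every Hurwitz matrix `A` can be written as `A = (K - R) * Q` with `K` skew-symmetric,
`R` symmetric positive definite, and `Q` symmetric positive definite. -/
theorem stmt2 (r : ℕ) (hr : 0 < r) (A : Matrix (Fin r) (Fin r) ℝ)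
    (hA : ∀ μ ∈ spectrum ℂ (A.map (algebraMap ℝ ℂ)), μ.re < 0) :
    ∃ K R Q : Matrix (Fin r) (Fin r) ℝ,
      Kᵀ = -K ∧ R.PosDef ∧ Q.PosDef ∧ A = (K - R) * Q := by
  obtain ⟨ε, hε, C, hC0, hdecay⟩ := matrix_decay hr A hA
  set X : ℝ → Matrix (Fin r) (Fin r) ℝ := fun t => exp (t • A) with hX
  set F : ℝ → Matrix (Fin r) (Fin r) ℝ := fun t => X t * (X t)ᵀ with hF
  let Tr : Matrix (Fin r) (Fin r) ℝ →L[ℝ] Matrix (Fin r) (Fin r) ℝ :=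
    LinearMap.toContinuousLinearMap
      { toFun := fun M => Mᵀ
        map_add' := fun M N => Matrix.transpose_add M N
        map_smul' := fun c M => Matrix.transpose_smul c M }
  have hXd : ∀ t : ℝ, HasDerivAt X (A * X t) t := fun t => hasDerivAt_exp_smul_const' A t
  have hXtd : ∀ t : ℝ, HasDerivAt (fun s => (X s)ᵀ) ((A * X t)ᵀ) t := by
    intro t
    have h := (Tr.hasFDerivAt (x := X t)).comp_hasDerivAt t (hXd t)
    exact h
  have hFd : ∀ t : ℝ, HasDerivAt F (A * F t + F t * Aᵀ) t := by
    intro t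
    have h := (hXd t).mul (hXtd t)
    convert h using 1
    · rfl
    · rfl
    rw [hF]
    show A * (X t * (X t)ᵀ) + X t * (X t)ᵀ * Aᵀ = A * X t * (X t)ᵀ + X t * (A * X t)ᵀ
    simp only [Matrix.transpose_mul]
    noncomm_ring
    rfl
  have hXcont : Continuous X := continuous_iff_continuousAt.mpr fun t => (hXd t).continuousAt
  have hFcont : Continuous F := continuous_iff_continuousAt.mpr fun t => (hFd t).continuousAt
  have hFnorm : ∀ t : ℝ, 0 ≤ t → ‖F t‖ ≤ (C * C) * Real.exp (-(2 * ε) * t) := by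
    intro t ht
    obtain ⟨h1, h2⟩ := hdecay t ht
    have hee : Real.exp (-(2 * ε) * t) = Real.exp (-ε * t) * Real.exp (-ε * t) := by
      rw [← Real.exp_add]; congr 1; ring
    calc ‖F t‖ ≤ ‖X t‖ * ‖(X t)ᵀ‖ := norm_mul_le _ _
      _ ≤ (C * Real.exp (-ε * t)) * (C * Real.exp (-ε * t)) :=
        mul_le_mul h1 h2 (norm_nonneg _) (by positivity)
      _ = (C * C) * Real.exp (-(2 * ε) * t) := by rw [hee]; ring
  have hg : IntegrableOn (fun t => (C * C) * Real.exp (-(2 * ε) * t)) (Ioi (0:ℝ)) :=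
    (exp_neg_integrableOn_Ioi 0 (by positivity : (0:ℝ) < 2 * ε)).const_mul _
  have hFint : IntegrableOn F (Ioi (0:ℝ)) := by
    refine hg.mono' hFcont.aestronglyMeasurable.restrict ?_
    filter_upwards [ae_restrict_mem measurableSet_Ioi] with t ht
    exact hFnorm t (le_of_lt ht)
  let D : Matrix (Fin r) (Fin r) ℝ →L[ℝ] Matrix (Fin r) (Fin r) ℝ :=
    LinearMap.toContinuousLinearMap
      { toFun := fun M => A * M + M * Aᵀ
        map_add' := fun M N => by noncomm_ring
        map_smul' := fun c M => by
          simp only [RingHom.id_apply, smul_add, Algebra.mul_smul_comm, Algebra.smul_mul_assoc] }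
  have hF'int : IntegrableOn (fun t => A * F t + F t * Aᵀ) (Ioi (0:ℝ)) := by
    have h := D.integrable_comp hFint
    exact h
  have hFtend : Tendsto F atTop (𝓝 0) := by
    have h2 : Tendsto (fun t : ℝ => (2 * ε) * t) atTop atTop :=
      Tendsto.const_mul_atTop (by positivity) tendsto_id
    have h3 : Tendsto (fun t : ℝ => Real.exp (-((2 * ε) * t))) atTop (𝓝 0) :=
      Real.tendsto_exp_neg_atTop_nhds_zero.comp h2
    have h4 : Tendsto (fun t : ℝ => (C * C) * Real.exp (-(2 * ε) * t)) atTop (𝓝 0) := by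
      have := h3.const_mul (C * C)
      simpa [neg_mul, mul_zero] using this
    refine squeeze_zero_norm' ?_ h4
    filter_upwards [eventually_ge_atTop (0:ℝ)] with t ht
    exact hFnorm t ht
  have hkey : ∫ t in Ioi (0:ℝ), (A * F t + F t * Aᵀ) = 0 - F 0 :=
    integral_Ioi_of_hasDerivAt_of_tendsto' (fun t _ => hFd t) hF'int hFtend
  have hF0 : F 0 = 1 := by
    rw [hF]
    simp only [hX, zero_smul, exp_zero, Matrix.transpose_one, mul_one]
  set P := ∫ t in Ioi (0:ℝ), F t with hP
  let Lm : Matrix (Fin r) (Fin r) ℝ →L[ℝ] Matrix (Fin r) (Fin r) ℝ :=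
    LinearMap.toContinuousLinearMap
      { toFun := fun M => A * M
        map_add' := fun M N => mul_add A M N
        map_smul' := fun c M => by
          simp only [RingHom.id_apply, Algebra.mul_smul_comm] }
  let Rm : Matrix (Fin r) (Fin r) ℝ →L[ℝ] Matrix (Fin r) (Fin r) ℝ :=
    LinearMap.toContinuousLinearMap
      { toFun := fun M => M * Aᵀ
        map_add' := fun M N => add_mul M N Aᵀ
        map_smul' := fun c M => by
          simp only [RingHom.id_apply, Algebra.smul_mul_assoc] }
  have hint1 : IntegrableOn (fun t => A * F t) (Ioi (0:ℝ)) := by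
    have h := Lm.integrable_comp hFint
    exact h
  have hint2 : IntegrableOn (fun t => F t * Aᵀ) (Ioi (0:ℝ)) := by
    have h := Rm.integrable_comp hFint
    exact h
  have hlin : ∫ t in Ioi (0:ℝ), (A * F t + F t * Aᵀ) = A * P + P * Aᵀ := by
    rw [integral_add hint1 hint2]
    congr 1
    · have h := Lm.integral_comp_comm hFint
      exact h
    · have h := Rm.integral_comp_comm hFint
      exact h
  have hlyap : A * P + P * Aᵀ = -1 := by
    rw [← hlin, hkey, hF0]
    abel
  have hPt : Pᵀ = P := by
    have h := Tr.integral_comp_comm hFint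
    have h2 : (fun t => Tr (F t)) = F := by
      funext t
      show (F t)ᵀ = F t
      rw [hF]
      rw [Matrix.transpose_mul, Matrix.transpose_transpose]
    rw [h2] at h
    calc Pᵀ = Tr P := rfl
      _ = P := h.symm
  -- positive definiteness of P
  have hquad : ∀ x : Fin r → ℝ, x ≠ 0 → 0 < x ⬝ᵥ (P *ᵥ x) := by
    intro x hx
    let phi : Matrix (Fin r) (Fin r) ℝ →L[ℝ] ℝ :=
      LinearMap.toContinuousLinearMap
        { toFun := fun M => x ⬝ᵥ (M *ᵥ x)
          map_add' := fun M N => by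
            simp [Matrix.add_mulVec, dotProduct_add]
          map_smul' := fun c M => by
            simp [Matrix.smul_mulVec, dotProduct_smul] }
    have hphiint : IntegrableOn (fun t => phi (F t)) (Ioi (0:ℝ)) := phi.integrable_comp hFint
    have hphi := phi.integral_comp_comm hFint
    have hgt : ∀ t : ℝ, phi (F t) = ((X t)ᵀ *ᵥ x) ⬝ᵥ ((X t)ᵀ *ᵥ x) := by
      intro t
      show x ⬝ᵥ ((X t * (X t)ᵀ) *ᵥ x) = _
      rw [← Matrix.mulVec_mulVec, Matrix.dotProduct_mulVec, ← Matrix.mulVec_transpose]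
    have hgpos : ∀ t : ℝ, 0 < phi (F t) := by
      intro t
      rw [hgt t]
      have hXu : IsUnit (X t) := Matrix.isUnit_exp (t • A)
      have hdet : IsUnit (X t)ᵀ.det := by
        rw [Matrix.det_transpose]
        exact (Matrix.isUnit_iff_isUnit_det (X t)).mp hXu
      have hw : (X t)ᵀ *ᵥ x ≠ 0 := by
        intro h0
        have h1 : ((X t)ᵀ)⁻¹ *ᵥ ((X t)ᵀ *ᵥ x) = 0 := by rw [h0, Matrix.mulVec_zero]
        rw [Matrix.mulVec_mulVec, Matrix.nonsing_inv_mul _ hdet, Matrix.one_mulVec] at h1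
        exact hx h1
      have h2 := Matrix.dotProduct_star_self_pos_iff (v := (X t)ᵀ *ᵥ x)
      simpa [star_trivial] using h2.mpr hw
    have hpos : 0 < ∫ t in Ioi (0:ℝ), phi (F t) := by
      rw [setIntegral_pos_iff_support_of_nonneg_ae (ae_of_all _ fun t => (hgpos t).le) hphiint]
      have hsupp : (Function.support fun t => phi (F t)) = Set.univ :=
        Set.eq_univ_of_forall fun t => (hgpos t).ne'
      rw [hsupp, Set.univ_inter, Real.volume_Ioi]
      exact ENNReal.zero_lt_top
    calc (0:ℝ) < ∫ t in Ioi (0:ℝ), phi (F t) := hpos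
      _ = phi P := hphi
      _ = x ⬝ᵥ (P *ᵥ x) := rfl
  have hPdef : P.PosDef := by
    rw [Matrix.posDef_iff_dotProduct_mulVec]
    constructor
    · show Pᴴ = P
      have h : Pᴴ = Pᵀ := by
        ext i j
        simp [Matrix.conjTranspose_apply]
      rw [h, hPt]
    · intro x hx
      simpa [star_trivial] using hquad x hx
  have hdet : IsUnit P.det := hPdef.det_pos.ne'.isUnit
  refine ⟨A * P + (2⁻¹ : ℝ) • 1, (2⁻¹ : ℝ) • 1, P⁻¹, ?_, ?_, hPdef.inv, ?_⟩
  · -- skew-symmetry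
    rw [Matrix.transpose_add, Matrix.transpose_mul, Matrix.transpose_smul,
      Matrix.transpose_one, hPt]
    have h : P * Aᵀ = -1 - A * P := eq_sub_of_add_eq' hlyap
    rw [h]
    set halfI := (2⁻¹ : ℝ) • (1 : Matrix (Fin r) (Fin r) ℝ) with hhI
    have hhalf : halfI + halfI = 1 := by
      rw [hhI, ← add_smul]
      norm_num
    rw [← hhalf]
    abel
  · -- PosDef of (2⁻¹) • 1
    rw [Matrix.posDef_iff_dotProduct_mulVec]
    constructor
    · show _ᴴ = _
      ext i j
      simp [Matrix.conjTranspose_apply, Matrix.smul_apply, Matrix.one_apply, eq_comm]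
    · intro x hx
      have h : 0 < x ⬝ᵥ x := by
        simpa [star_trivial] using Matrix.dotProduct_star_self_pos_iff.mpr hx
      have h2 : star x ⬝ᵥ (((2⁻¹ : ℝ) • (1 : Matrix (Fin r) (Fin r) ℝ)) *ᵥ x)
          = 2⁻¹ * (x ⬝ᵥ x) := by
        rw [star_trivial, Matrix.smul_mulVec, Matrix.one_mulVec, dotProduct_smul,
          smul_eq_mul]
      rw [h2]
      exact mul_pos (by norm_num) h
  · -- the factorization
    have h : A * P + (2⁻¹ : ℝ) • (1 : Matrix (Fin r) (Fin r) ℝ) - (2⁻¹ : ℝ) • 1 = A * P := by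
      abel
    rw [h, Matrix.mul_assoc, Matrix.mul_nonsing_inv P hdet, Matrix.mul_one]
end

section
/- Let r be a positive natural number, let Q be a symmetric r×r real matrix, and let H : Fin r → Fin r → Fin r → ℝ be a third-order tensor. Suppose that for every k ∈ Fin r there exists a skew-symmetric r×r real matrix S_k (S_kᵀ = -S_k) such that the k-th frontal slice of H equals S_k * Q, i.e., H i j k = Σ_l (S_k) i l * Q l j for all i, j. Then for every z ∈ ℝ^r, z ⬝ᵥ (Q.mulVec (g z)) + (g z) ⬝ᵥ (Q.mulVec z) = 0, where the quadratic contraction g z ∈ ℝ^r is defined componentwise by (g z) i = Σ_{j,k} H i j k * z j * z k. -/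
open Matrix

lemma skew_quad_s4 {r : ℕ} (S : Matrix (Fin r) (Fin r) ℝ) (hS : Sᵀ = -S)
    (w : Fin r → ℝ) : w ⬝ᵥ S.mulVec w = 0 := by
  have h1 : w ⬝ᵥ S.mulVec w = (Sᵀ.mulVec w) ⬝ᵥ w := by
    rw [dotProduct_mulVec, ← Matrix.mulVec_transpose]
  rw [hS] at h1
  simp only [neg_mulVec, neg_dotProduct] at h1
  rw [dotProduct_comm (S *ᵥ w) w] at h1
  linarith

/-- Proposition 2 (energy-preserving quadratic tensor): if every frontal slice of `H`
is of the form `S_k * Q` with `S_k` skew-symmetric and `Q` symmetric, then the quadratic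
contraction `g z = H : z zᵀ` satisfies `zᵀ Q (g z) + (g z)ᵀ Q z = 0` for all `z`. -/
theorem stmt4 (r : ℕ) (hr : 0 < r) (Q : Matrix (Fin r) (Fin r) ℝ) (hQ : Qᵀ = Q)
    (H : Fin r → Fin r → Fin r → ℝ)
    (hH : ∀ k : Fin r, ∃ S : Matrix (Fin r) (Fin r) ℝ, Sᵀ = -S ∧
      ∀ i j : Fin r, H i j k = ∑ l, S i l * Q l j)
    (g : (Fin r → ℝ) → (Fin r → ℝ))
    (hg : ∀ (z : Fin r → ℝ) (i : Fin r), g z i = ∑ j, ∑ k, H i j k * z j * z k) :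
    ∀ z : Fin r → ℝ, z ⬝ᵥ Q.mulVec (g z) + (g z) ⬝ᵥ Q.mulVec z = 0 := by
  intro z
  choose S hSskew hSH using hH
  set w := Q.mulVec z with hw
  have hgz : g z = ∑ k, z k • ((S k).mulVec w) := by
    funext i
    rw [hg]
    simp only [Finset.sum_apply, Pi.smul_apply, smul_eq_mul, mulVec, dotProduct, hw,
      hSH, Finset.sum_mul, Finset.mul_sum]
    rw [Finset.sum_comm]
    refine Finset.sum_congr rfl fun k _ => ?_
    rw [Finset.sum_comm]
    refine Finset.sum_congr rfl fun l _ => ?_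
    refine Finset.sum_congr rfl fun j _ => ?_
    ring
  have key : (g z) ⬝ᵥ w = 0 := by
    have expand : (∑ k, z k • ((S k).mulVec w)) ⬝ᵥ w
        = ∑ k, z k * (w ⬝ᵥ (S k).mulVec w) := by
      simp only [dotProduct, Finset.sum_apply, Pi.smul_apply, smul_eq_mul,
        Finset.sum_mul, Finset.mul_sum]
      rw [Finset.sum_comm]
      exact Finset.sum_congr rfl fun k _ => Finset.sum_congr rfl fun i _ => by ring
    rw [hgz, expand]
    apply Finset.sum_eq_zero; intro k _
    rw [skew_quad_s4 (S k) (hSskew k) w, mul_zero]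
  have key2 : z ⬝ᵥ Q.mulVec (g z) = (g z) ⬝ᵥ w := by
    rw [dotProduct_mulVec, ← Matrix.mulVec_transpose, hQ, dotProduct_comm, hw]
  rw [key2, key]
  ring
end

section
/- Let r be a positive natural number. Let K, R, Q be r×r real matrices with K skew-symmetric (Kᵀ = -K), R symmetric positive semi-definite, and Q symmetric positive definite, and set A = (K - R) * Q. Let H : Fin r → Fin r → Fin r → ℝ be a third-order tensor such that for every k ∈ Fin r there exists a skew-symmetric matrix S_k with H i j k = Σ_l (S_k) i l * Q l j for all i, j. Let z : ℝ → (Fin r → ℝ) satisfy, for every t ∈ ℝ, HasDerivAt z (A.mulVec (z t) + g (z t)) t, where (g w) i = Σ_{j,k} H i j k * w j * w k. Then the Lyapunov function t ↦ (z t) ⬝ᵥ (Q.mulVec (z t)) is antitone (nonincreasing) on ℝ. -/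
open Matrix

lemma skew_quad' {r : ℕ} {M : Matrix (Fin r) (Fin r) ℝ} (hM : Mᵀ = -M) (y : Fin r → ℝ) :
    y ⬝ᵥ M.mulVec y = 0 := by
  have h1 : y ⬝ᵥ M.mulVec y = Mᵀ.mulVec y ⬝ᵥ y := by
    rw [Matrix.dotProduct_mulVec, Matrix.mulVec_transpose]
  rw [hM, Matrix.neg_mulVec, neg_dotProduct] at h1
  have h2 : y ⬝ᵥ M.mulVec y = M.mulVec y ⬝ᵥ y := dotProduct_comm _ _
  linarith

lemma symm_move' {r : ℕ} {Q : Matrix (Fin r) (Fin r) ℝ} (hQ : Qᵀ = Q) (x u : Fin r → ℝ) :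
    x ⬝ᵥ Q.mulVec u = Q.mulVec x ⬝ᵥ u := by
  rw [Matrix.dotProduct_mulVec, ← Matrix.mulVec_transpose, hQ]

/-- Lyapunov stability of the parameterized quadratic reduced-order dynamics:
along any solution of `dz/dt = A z + H : z zᵀ` with `A = (K - R) * Q` (`K` skew-symmetric,
`R` positive semi-definite, `Q` positive definite) and energy-preserving `H`, the Lyapunov
function `t ↦ z(t)ᵀ Q z(t)` is nonincreasing. -/
theorem stmt5 (r : ℕ) (hr : 0 < r) (K R Q : Matrix (Fin r) (Fin r) ℝ)
    (hK : Kᵀ = -K) (hR : R.PosSemidef) (hQ : Q.PosDef)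
    (A : Matrix (Fin r) (Fin r) ℝ) (hA : A = (K - R) * Q)
    (H : Fin r → Fin r → Fin r → ℝ)
    (hH : ∀ k : Fin r, ∃ S : Matrix (Fin r) (Fin r) ℝ, Sᵀ = -S ∧
      ∀ i j : Fin r, H i j k = ∑ l, S i l * Q l j)
    (g : (Fin r → ℝ) → (Fin r → ℝ))
    (hg : ∀ (w : Fin r → ℝ) (i : Fin r), g w i = ∑ j, ∑ k, H i j k * w j * w k)
    (z : ℝ → Fin r → ℝ)
    (hz : ∀ t : ℝ, HasDerivAt z (A.mulVec (z t) + g (z t)) t) :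
    Antitone (fun t : ℝ => (z t) ⬝ᵥ Q.mulVec (z t)) := by
  choose S hS1 hS2 using hH
  have hQsymm : Qᵀ = Q := hQ.isHermitian
  -- derivative of the Lyapunov function
  set v : ℝ → Fin r → ℝ := fun t => A.mulVec (z t) + g (z t) with hv
  have hderiv : ∀ t, HasDerivAt (fun t : ℝ => (z t) ⬝ᵥ Q.mulVec (z t))
      (v t ⬝ᵥ Q.mulVec (z t) + z t ⬝ᵥ Q.mulVec (v t)) t := by
    intro t
    have hzi : ∀ i, HasDerivAt (fun t => z t i) (v t i) t :=
      fun i => hasDerivAt_pi.1 (hz t) i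
    have key : HasDerivAt (fun t : ℝ => ∑ i, ∑ j, z t i * Q i j * z t j)
        (∑ i, ∑ j, (v t i * Q i j * z t j + z t i * Q i j * v t j)) t := by
      apply HasDerivAt.fun_sum
      intro i _
      apply HasDerivAt.fun_sum
      intro j _
      exact ((hzi i).mul_const (Q i j)).mul (hzi j)
    have e1 : (fun t : ℝ => (z t) ⬝ᵥ Q.mulVec (z t)) =
        fun t : ℝ => ∑ i, ∑ j, z t i * Q i j * z t j := by
      funext t
      simp [dotProduct, mulVec, Finset.mul_sum, mul_assoc]
    have e2 : v t ⬝ᵥ Q.mulVec (z t) + z t ⬝ᵥ Q.mulVec (v t) =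
        ∑ i, ∑ j, (v t i * Q i j * z t j + z t i * Q i j * v t j) := by
      simp [dotProduct, mulVec, Finset.mul_sum, mul_assoc, Finset.sum_add_distrib]
    rw [e1, e2]
    exact key
  -- the derivative is nonpositive
  have hnonpos : ∀ t, v t ⬝ᵥ Q.mulVec (z t) + z t ⬝ᵥ Q.mulVec (v t) ≤ 0 := by
    intro t
    set w := z t with hw
    set y := Q.mulVec w with hy
    -- quadratic (tensor) term vanishes
    have hgw : ∀ i, g w i = ∑ k, w k * ((S k).mulVec y) i := by
      intro i
      rw [hg]
      rw [Finset.sum_comm]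
      refine Finset.sum_congr rfl fun k _ => ?_
      simp only [hS2, mulVec, dotProduct, hy, Finset.sum_mul, Finset.mul_sum]
      rw [Finset.sum_comm]
      exact Finset.sum_congr rfl fun j _ => Finset.sum_congr rfl fun l _ => by ring
    have hgzero : y ⬝ᵥ g w = 0 := by
      have h1 : y ⬝ᵥ g w = ∑ k, w k * (y ⬝ᵥ (S k).mulVec y) := by
        simp only [dotProduct, hgw, Finset.mul_sum]
        rw [Finset.sum_comm]
        refine Finset.sum_congr rfl fun k _ => ?_
        exact Finset.sum_congr rfl fun i _ => by ring
      rw [h1]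
      simp [fun k => skew_quad' (hS1 k) y]
    -- linear term
    have hlin : w ⬝ᵥ Q.mulVec (A.mulVec w) = y ⬝ᵥ (K - R).mulVec y := by
      rw [symm_move' hQsymm, ← hy, hA]
      rw [Matrix.mulVec_mulVec]
    have hKy : y ⬝ᵥ K.mulVec y = 0 := skew_quad' hK y
    have hRy : 0 ≤ y ⬝ᵥ R.mulVec y := hR.dotProduct_mulVec_nonneg y
    have hmain : w ⬝ᵥ Q.mulVec (v t) ≤ 0 := by
      have : w ⬝ᵥ Q.mulVec (v t) = w ⬝ᵥ Q.mulVec (A.mulVec w) + y ⬝ᵥ g w := by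
        rw [hv]
        simp only [← hw]
        rw [Matrix.mulVec_add, dotProduct_add, symm_move' hQsymm w (g w), ← hy]
      rw [this, hlin, Matrix.sub_mulVec, dotProduct_sub, hKy, hgzero]
      linarith
    have hflip : v t ⬝ᵥ Q.mulVec w = w ⬝ᵥ Q.mulVec (v t) := by
      rw [symm_move' hQsymm, dotProduct_comm, symm_move' hQsymm]
    rw [hflip]
    linarith
  -- conclude
  apply antitone_of_deriv_nonpos
  · exact fun t => ((hderiv t).differentiableAt)
  · intro t
    rw [(hderiv t).deriv]
    exact hnonpos t
end

section
/- Let r be a positive natural number. Let K, R, Q be r×r real matrices with K skew-symmetric (Kᵀ = -K), R symmetric positive definite, and Q symmetric positive definite, and set A = (K - R) * Q. Let H : Fin r → Fin r → Fin r → ℝ be a third-order tensor such that for every k ∈ Fin r there exists a skew-symmetric matrix S_k with H i j k = Σ_l (S_k) i l * Q l j for all i, j. Let z : ℝ → (Fin r → ℝ) satisfy, for every t ∈ ℝ, HasDerivAt z (A.mulVec (z t) + g (z t)) t, where (g w) i = Σ_{j,k} H i j k * w j * w k. Then z t tends to 0 as t → +∞ (Tendsto z atTop (𝓝 0)), i.e.,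 the reduced-order model is globally asymptotically stable. -/
open Matrix Filter

section Aux

lemma stmt6_quad_smul {r : ℕ} (M : Matrix (Fin r) (Fin r) ℝ) (a : ℝ) (x : Fin r → ℝ) :
    (a • x) ⬝ᵥ M.mulVec (a • x) = a ^ 2 * (x ⬝ᵥ M.mulVec x) := by
  rw [Matrix.mulVec_smul, smul_dotProduct, dotProduct_smul, smul_eq_mul, smul_eq_mul]
  ring

lemma stmt6_dot_eq_norm {r : ℕ} (x : EuclideanSpace ℝ (Fin r)) :
    (x : Fin r → ℝ) ⬝ᵥ (x : Fin r → ℝ) = ‖x‖ ^ 2 := by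
  rw [← real_inner_self_eq_norm_sq]
  simp [PiLp.inner_apply, dotProduct, mul_comm]
  rw [EuclideanSpace.norm_eq, Real.sq_sqrt (Finset.sum_nonneg fun i _ => by positivity)]
  simp [sq, Real.norm_eq_abs]

lemma stmt6_quad_cont {r : ℕ} (M : Matrix (Fin r) (Fin r) ℝ) :
    Continuous fun x : EuclideanSpace ℝ (Fin r) => (x : Fin r → ℝ) ⬝ᵥ M.mulVec x := by
  have h1 : Continuous fun x : EuclideanSpace ℝ (Fin r) => (x : Fin r → ℝ) :=
    (PiLp.continuous_ofLp (p := 2) (β := fun _ : Fin r => ℝ))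
  simp only [dotProduct, Matrix.mulVec]
  fun_prop

lemma stmt6_quad_lower {r : ℕ} (hr : 0 < r) (M : Matrix (Fin r) (Fin r) ℝ)
    (h : ∀ x : Fin r → ℝ, x ≠ 0 → 0 < x ⬝ᵥ M.mulVec x) :
    ∃ c > 0, ∀ x : Fin r → ℝ, c * (x ⬝ᵥ x) ≤ x ⬝ᵥ M.mulVec x := by
  have hcpt : IsCompact (Metric.sphere (0 : EuclideanSpace ℝ (Fin r)) 1) := isCompact_sphere _ _
  have hne : (Metric.sphere (0 : EuclideanSpace ℝ (Fin r)) 1).Nonempty := by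
    refine ⟨EuclideanSpace.single ⟨0, hr⟩ (1:ℝ), ?_⟩
    simp [EuclideanSpace.norm_single]
  obtain ⟨x₀, hx₀mem, hx₀min⟩ := hcpt.exists_isMinOn hne (stmt6_quad_cont M).continuousOn
  set c := (x₀ : Fin r → ℝ) ⬝ᵥ M.mulVec x₀ with hc
  have hx₀ne : (x₀ : Fin r → ℝ) ≠ 0 := by
    intro h0
    have : ‖x₀‖ = 1 := by simpa using hx₀mem
    rw [show x₀ = 0 from by simpa using h0] at this
    simp at this
  refine ⟨c, h _ hx₀ne, fun x => ?_⟩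
  by_cases hx : x = 0
  · simp [hx]
  · set X : EuclideanSpace ℝ (Fin r) := WithLp.toLp 2 x with hX
    have hXne : X ≠ 0 := fun h => hx (by simpa [hX] using congrArg WithLp.ofLp h)
    have hnorm_pos : 0 < ‖X‖ := norm_pos_iff.mpr hXne
    set u : EuclideanSpace ℝ (Fin r) := ‖X‖⁻¹ • X with hu
    have humem : u ∈ Metric.sphere (0 : EuclideanSpace ℝ (Fin r)) 1 := by
      simp only [Metric.mem_sphere, dist_zero_right, hu, norm_smul, Real.norm_eq_abs,
        abs_inv, abs_norm]
      exact inv_mul_cancel₀ hnorm_pos.ne'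
    have hmin := hx₀min humem
    have hsc : (u : Fin r → ℝ) ⬝ᵥ M.mulVec u
        = (‖X‖⁻¹) ^ 2 * (x ⬝ᵥ M.mulVec x) := stmt6_quad_smul M _ x
    have hnx : (x ⬝ᵥ x) = ‖X‖ ^ 2 := stmt6_dot_eq_norm X
    have hle : c ≤ (‖X‖⁻¹) ^ 2 * (x ⬝ᵥ M.mulVec x) := by
      rw [← hsc]; exact hmin
    calc c * (x ⬝ᵥ x) = c * ‖X‖ ^ 2 := by rw [hnx]
      _ ≤ ((‖X‖⁻¹) ^ 2 * (x ⬝ᵥ M.mulVec x)) * ‖X‖ ^ 2 :=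
          mul_le_mul_of_nonneg_right hle (by positivity)
      _ = x ⬝ᵥ M.mulVec x := by field_simp

lemma stmt6_quad_upper {r : ℕ} (hr : 0 < r) (M : Matrix (Fin r) (Fin r) ℝ) :
    ∃ C > 0, ∀ x : Fin r → ℝ, x ⬝ᵥ M.mulVec x ≤ C * (x ⬝ᵥ x) := by
  have hcpt : IsCompact (Metric.sphere (0 : EuclideanSpace ℝ (Fin r)) 1) := isCompact_sphere _ _
  have hne : (Metric.sphere (0 : EuclideanSpace ℝ (Fin r)) 1).Nonempty := by
    refine ⟨EuclideanSpace.single ⟨0, hr⟩ (1:ℝ), ?_⟩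
    simp [EuclideanSpace.norm_single]
  obtain ⟨x₀, hx₀mem, hx₀max⟩ := hcpt.exists_isMaxOn hne (stmt6_quad_cont M).continuousOn
  set C := max ((x₀ : Fin r → ℝ) ⬝ᵥ M.mulVec x₀) 1 with hC
  refine ⟨C, lt_of_lt_of_le one_pos (le_max_right _ _), fun x => ?_⟩
  by_cases hx : x = 0
  · simp [hx]
  · set X : EuclideanSpace ℝ (Fin r) := WithLp.toLp 2 x with hX
    have hXne : X ≠ 0 := fun h => hx (by simpa [hX] using congrArg WithLp.ofLp h)
    have hnorm_pos : 0 < ‖X‖ := norm_pos_iff.mpr hXne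
    set u : EuclideanSpace ℝ (Fin r) := ‖X‖⁻¹ • X with hu
    have humem : u ∈ Metric.sphere (0 : EuclideanSpace ℝ (Fin r)) 1 := by
      simp only [Metric.mem_sphere, dist_zero_right, hu, norm_smul, Real.norm_eq_abs,
        abs_inv, abs_norm]
      exact inv_mul_cancel₀ hnorm_pos.ne'
    have hmax := hx₀max humem
    have hsc : (u : Fin r → ℝ) ⬝ᵥ M.mulVec u
        = (‖X‖⁻¹) ^ 2 * (x ⬝ᵥ M.mulVec x) := stmt6_quad_smul M _ x
    have hnx : (x ⬝ᵥ x) = ‖X‖ ^ 2 := stmt6_dot_eq_norm X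
    have hle : (‖X‖⁻¹) ^ 2 * (x ⬝ᵥ M.mulVec x) ≤ C := by
      rw [← hsc]; exact le_trans hmax (le_max_left _ _)
    calc x ⬝ᵥ M.mulVec x = ((‖X‖⁻¹) ^ 2 * (x ⬝ᵥ M.mulVec x)) * ‖X‖ ^ 2 := by field_simp
      _ ≤ C * ‖X‖ ^ 2 := mul_le_mul_of_nonneg_right hle (by positivity)
      _ = C * (x ⬝ᵥ x) := by rw [hnx]

lemma stmt6_symm_of_posdef {r : ℕ} {Q : Matrix (Fin r) (Fin r) ℝ} (hQ : Q.PosDef) : Qᵀ = Q := by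
  have := hQ.1
  rwa [Matrix.IsHermitian, Matrix.conjTranspose_eq_transpose_of_trivial] at this

lemma stmt6_dot_symm_mulVec {r : ℕ} {Q : Matrix (Fin r) (Fin r) ℝ} (hQ : Qᵀ = Q)
    (x y : Fin r → ℝ) : x ⬝ᵥ Q.mulVec y = (Q.mulVec x) ⬝ᵥ y := by
  rw [dotProduct_mulVec]
  nth_rewrite 1 [← hQ]
  rw [Matrix.vecMul_transpose]

lemma stmt6_skew_quad_zero {r : ℕ} {K : Matrix (Fin r) (Fin r) ℝ} (hK : Kᵀ = -K)
    (w : Fin r → ℝ) : w ⬝ᵥ K.mulVec w = 0 := by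
  have h1 : w ⬝ᵥ K.mulVec w = -((K.mulVec w) ⬝ᵥ w) := by
    rw [dotProduct_mulVec, ← Matrix.mulVec_transpose, hK, Matrix.neg_mulVec, neg_dotProduct]
  have h2 : (K.mulVec w) ⬝ᵥ w = w ⬝ᵥ K.mulVec w := dotProduct_comm _ _
  linarith [h1, h2]

lemma stmt6_energy_zero {r : ℕ} (Q : Matrix (Fin r) (Fin r) ℝ)
    (H : Fin r → Fin r → Fin r → ℝ)
    (hH : ∀ k : Fin r, ∃ S : Matrix (Fin r) (Fin r) ℝ, Sᵀ = -S ∧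
      ∀ i j : Fin r, H i j k = ∑ l, S i l * Q l j)
    (g : (Fin r → ℝ) → (Fin r → ℝ))
    (hg : ∀ (w : Fin r → ℝ) (i : Fin r), g w i = ∑ j, ∑ k, H i j k * w j * w k)
    (x : Fin r → ℝ) : (Q.mulVec x) ⬝ᵥ g x = 0 := by
  choose S hSskew hSval using hH
  set w := Q.mulVec x with hw
  have h1 : ∀ k i, (∑ j, H i j k * x j) = ((S k).mulVec w) i := by
    intro k i
    simp only [hSval, Matrix.mulVec, dotProduct, Finset.sum_mul]
    rw [Finset.sum_comm]
    refine Finset.sum_congr rfl fun l _ => ?_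
    rw [hw]
    simp only [Matrix.mulVec, dotProduct, Finset.mul_sum]
    exact Finset.sum_congr rfl fun j _ => by ring
  have h2 : ∀ i, g x i = ∑ k, ((S k).mulVec w) i * x k := by
    intro i
    rw [hg, Finset.sum_comm]
    refine Finset.sum_congr rfl fun k _ => ?_
    rw [← h1 k i, Finset.sum_mul]
  have h3 : w ⬝ᵥ g x = ∑ k, (w ⬝ᵥ ((S k).mulVec w)) * x k := by
    simp only [dotProduct, h2, Finset.mul_sum, Finset.sum_mul]
    rw [Finset.sum_comm]
    exact Finset.sum_congr rfl fun k _ => Finset.sum_congr rfl fun i _ => by ring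
  rw [h3]
  simp [stmt6_skew_quad_zero (hSskew _)]

end Aux

/-- Global asymptotic stability of the parameterized quadratic reduced-order dynamics:
along any solution of `dz/dt = A z + H : z zᵀ` with `A = (K - R) * Q` (`K` skew-symmetric,
`R` symmetric positive definite, `Q` symmetric positive definite) and energy-preserving `H`,
the state `z(t)` tends to `0` as `t → +∞`. -/
theorem stmt6 (r : ℕ) (hr : 0 < r) (K R Q : Matrix (Fin r) (Fin r) ℝ)
    (hK : Kᵀ = -K) (hR : R.PosDef) (hQ : Q.PosDef)
    (A : Matrix (Fin r) (Fin r) ℝ) (hA : A = (K - R) * Q)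
    (H : Fin r → Fin r → Fin r → ℝ)
    (hH : ∀ k : Fin r, ∃ S : Matrix (Fin r) (Fin r) ℝ, Sᵀ = -S ∧
      ∀ i j : Fin r, H i j k = ∑ l, S i l * Q l j)
    (g : (Fin r → ℝ) → (Fin r → ℝ))
    (hg : ∀ (w : Fin r → ℝ) (i : Fin r), g w i = ∑ j, ∑ k, H i j k * w j * w k)
    (z : ℝ → Fin r → ℝ)
    (hz : ∀ t : ℝ, HasDerivAt z (A.mulVec (z t) + g (z t)) t) :
    Tendsto z atTop (nhds 0) := by
  have hQsymm : Qᵀ = Q := stmt6_symm_of_posdef hQ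
  -- positivity of quadratic forms over ℝ (no star)
  have hQpos : ∀ x : Fin r → ℝ, x ≠ 0 → 0 < x ⬝ᵥ Q.mulVec x := by
    intro x hx
    simpa using hQ.dotProduct_mulVec_pos hx
  have hRpos : ∀ x : Fin r → ℝ, x ≠ 0 → 0 < x ⬝ᵥ R.mulVec x := by
    intro x hx
    simpa using hR.dotProduct_mulVec_pos hx
  have hQQpos : ∀ x : Fin r → ℝ, x ≠ 0 → 0 < x ⬝ᵥ (Q * Q).mulVec x := by
    intro x hx
    have hrw : x ⬝ᵥ (Q * Q).mulVec x = (Q.mulVec x) ⬝ᵥ (Q.mulVec x) := by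
      rw [← Matrix.mulVec_mulVec, stmt6_dot_symm_mulVec hQsymm]
    rw [hrw]
    have hwne : Q.mulVec x ≠ 0 := by
      intro h0
      have := hQpos x hx
      rw [h0] at this
      simp at this
    have hnn : 0 ≤ (Q.mulVec x) ⬝ᵥ (Q.mulVec x) :=
      Finset.sum_nonneg fun i _ => mul_self_nonneg _
    rcases lt_or_eq_of_le hnn with h | h
    · exact h
    · exact absurd (dotProduct_self_eq_zero.mp h.symm) hwne
  obtain ⟨cR, hcR, hRlow⟩ := stmt6_quad_lower hr R hRpos
  obtain ⟨c2, hc2, hQQlow⟩ := stmt6_quad_lower hr (Q * Q) hQQpos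
  obtain ⟨cQ, hcQ, hQlow⟩ := stmt6_quad_lower hr Q hQpos
  obtain ⟨CQ, hCQ, hQup⟩ := stmt6_quad_upper hr Q
  -- the Lyapunov function
  set V : ℝ → ℝ := fun t => ∑ i, ∑ j, z t i * Q i j * z t j with hV
  have hVeq : ∀ y : Fin r → ℝ, y ⬝ᵥ Q.mulVec y = ∑ i, ∑ j, y i * Q i j * y j := by
    intro y
    simp only [dotProduct, Matrix.mulVec, Finset.mul_sum]
    exact Finset.sum_congr rfl fun i _ => Finset.sum_congr rfl fun j _ => by ring
  have hVval : ∀ t, V t = z t ⬝ᵥ Q.mulVec (z t) := fun t => (hVeq (z t)).symm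
  set v : ℝ → Fin r → ℝ := fun t => A.mulVec (z t) + g (z t) with hv
  have hzc : ∀ (t : ℝ) (i : Fin r), HasDerivAt (fun s => z s i) (v t i) t :=
    fun t i => (hasDerivAt_pi.1 (hz t)) i
  set w : ℝ → Fin r → ℝ := fun t => Q.mulVec (z t) with hwdef
  set VD : ℝ → ℝ := fun t => -2 * (w t ⬝ᵥ R.mulVec (w t)) with hVD
  -- derivative of V
  have hder : ∀ t, HasDerivAt V (VD t) t := by
    intro t
    have hd : HasDerivAt V
        (∑ i, ∑ j, (v t i * Q i j * z t j + z t i * Q i j * v t j)) t := by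
      apply HasDerivAt.fun_sum
      intro i _
      apply HasDerivAt.fun_sum
      intro j _
      exact ((hzc t i).mul_const (Q i j)).mul (hzc t j)
    have heq : (∑ i, ∑ j, (v t i * Q i j * z t j + z t i * Q i j * v t j)) = VD t := by
      have e1 : (∑ i, ∑ j, v t i * Q i j * z t j) = v t ⬝ᵥ Q.mulVec (z t) := by
        simp only [dotProduct, Matrix.mulVec, Finset.mul_sum]
        exact Finset.sum_congr rfl fun i _ => Finset.sum_congr rfl fun j _ => by ring
      have e2 : (∑ i, ∑ j, z t i * Q i j * v t j) = z t ⬝ᵥ Q.mulVec (v t) := by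
        simp only [dotProduct, Matrix.mulVec, Finset.mul_sum]
        exact Finset.sum_congr rfl fun i _ => Finset.sum_congr rfl fun j _ => by ring
      have e3 : v t ⬝ᵥ Q.mulVec (z t) = z t ⬝ᵥ Q.mulVec (v t) := by
        rw [stmt6_dot_symm_mulVec hQsymm, dotProduct_comm, stmt6_dot_symm_mulVec hQsymm]
      have e4 : z t ⬝ᵥ Q.mulVec (v t) = -(w t ⬝ᵥ R.mulVec (w t)) := by
        rw [hv]
        simp only [Matrix.mulVec_add, dotProduct_add]
        have eA : z t ⬝ᵥ Q.mulVec (A.mulVec (z t)) = -(w t ⬝ᵥ R.mulVec (w t)) := by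
          rw [stmt6_dot_symm_mulVec hQsymm, hA, ← Matrix.mulVec_mulVec]
          rw [Matrix.sub_mulVec, dotProduct_sub]
          rw [stmt6_skew_quad_zero hK]
          simp [hwdef]
        have eg : z t ⬝ᵥ Q.mulVec (g (z t)) = 0 := by
          rw [stmt6_dot_symm_mulVec hQsymm]
          exact stmt6_energy_zero Q H hH g hg (z t)
        rw [eA, eg, add_zero]
      have hsplit : (∑ i, ∑ j, (v t i * Q i j * z t j + z t i * Q i j * v t j))
          = (∑ i, ∑ j, v t i * Q i j * z t j) + (∑ i, ∑ j, z t i * Q i j * v t j) := by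
        rw [← Finset.sum_add_distrib]
        exact Finset.sum_congr rfl fun i _ => Finset.sum_add_distrib
      rw [hsplit, e1, e2, e3, e4]
      simp only [hVD]
      ring
    rw [← heq]
    exact hd
  -- nonnegativity and quadratic bounds
  have hdnn : ∀ y : Fin r → ℝ, 0 ≤ y ⬝ᵥ y := fun y =>
    Finset.sum_nonneg fun i _ => mul_self_nonneg _
  have hVnonneg : ∀ t, 0 ≤ V t := by
    intro t
    rw [hVval]
    exact le_trans (by nlinarith [hdnn (z t), hQlow (z t)] : (0:ℝ) ≤ cQ * (z t ⬝ᵥ z t))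
      (hQlow (z t))
  set c : ℝ := 2 * cR * c2 / CQ with hc
  have hcpos : 0 < c := by positivity
  -- the key differential inequality VD t ≤ -c * V t
  have key : ∀ t, VD t ≤ -c * V t := by
    intro t
    have hww : z t ⬝ᵥ (Q * Q).mulVec (z t) = w t ⬝ᵥ w t := by
      rw [← Matrix.mulVec_mulVec, stmt6_dot_symm_mulVec hQsymm]
    have b1 : cR * (w t ⬝ᵥ w t) ≤ w t ⬝ᵥ R.mulVec (w t) := hRlow (w t)
    have b2 : c2 * (z t ⬝ᵥ z t) ≤ w t ⬝ᵥ w t := by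
      rw [← hww]; exact hQQlow (z t)
    have b3 : V t ≤ CQ * (z t ⬝ᵥ z t) := by
      rw [hVval]; exact hQup (z t)
    have hzz : 0 ≤ z t ⬝ᵥ z t := hdnn (z t)
    rw [hVD, hc]
    have hRw : cR * c2 * (z t ⬝ᵥ z t) ≤ w t ⬝ᵥ R.mulVec (w t) := by
      nlinarith
    have hVz : V t / CQ ≤ z t ⬝ᵥ z t := by
      rw [div_le_iff₀ hCQ]
      linarith [b3]
    have : cR * c2 * (V t / CQ) ≤ w t ⬝ᵥ R.mulVec (w t) := by
      have := mul_le_mul_of_nonneg_left hVz (by positivity : (0:ℝ) ≤ cR * c2)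
      linarith
    have hgoal : -2 * (w t ⬝ᵥ R.mulVec (w t)) ≤ -(2 * cR * c2 / CQ) * V t := by
      have h2 : 2 * cR * c2 / CQ * V t = 2 * (cR * c2 * (V t / CQ)) := by
        field_simp
      nlinarith [this]
    simpa using hgoal
  -- exponential decay via the auxiliary function W = exp(c t) * V
  set W : ℝ → ℝ := fun t => Real.exp (c * t) * V t with hW
  have hWder : ∀ t, HasDerivAt W (Real.exp (c * t) * (c * 1) * V t
      + Real.exp (c * t) * VD t) t := by
    intro t
    exact (((hasDerivAt_id t).const_mul c).exp).mul (hder t)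
  have hWdiff : Differentiable ℝ W := fun t => (hWder t).differentiableAt
  have hanti : Antitone W := by
    apply antitone_of_deriv_nonpos hWdiff
    intro t
    rw [(hWder t).deriv]
    have h1 : Real.exp (c * t) * VD t ≤ Real.exp (c * t) * (-c * V t) :=
      mul_le_mul_of_nonneg_left (key t) (Real.exp_pos _).le
    nlinarith [h1]
  -- V t ≤ exp (-(c t)) * V 0 for t ≥ 0
  have hVbound : ∀ t : ℝ, 0 ≤ t → V t ≤ Real.exp (-(c * t)) * V 0 := by
    intro t ht
    have hW0 : Real.exp (c * t) * V t ≤ V 0 := by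
      have h := hanti ht
      simpa [hW] using h
    have hepos : 0 < Real.exp (c * t) := Real.exp_pos _
    rw [Real.exp_neg, inv_mul_eq_div, le_div_iff₀ hepos]
    linarith [hW0, mul_comm (V t) (Real.exp (c * t))]
  -- V tends to 0
  have hVtends : Tendsto V atTop (nhds 0) := by
    have hup : Tendsto (fun t : ℝ => Real.exp (-(c * t)) * V 0) atTop (nhds 0) := by
      have h1 : Tendsto (fun t : ℝ => -(c * t)) atTop atBot := by
        have := (tendsto_id.const_mul_atTop hcpos : Tendsto (fun t : ℝ => c * t) atTop atTop)
        exact tendsto_neg_atTop_atBot.comp this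
      have h2 : Tendsto (fun t : ℝ => Real.exp (-(c * t))) atTop (nhds 0) :=
        Real.tendsto_exp_atBot.comp h1
      simpa using h2.mul_const (V 0)
    refine tendsto_of_tendsto_of_tendsto_of_le_of_le' tendsto_const_nhds hup
      (Eventually.of_forall hVnonneg) ?_
    filter_upwards [eventually_ge_atTop (0:ℝ)] with t ht
    exact hVbound t ht
  -- conclude componentwise convergence of z
  rw [tendsto_pi_nhds]
  intro i
  have hsq : Tendsto (fun t => (z t i) ^ 2) atTop (nhds 0) := by
    have hb : ∀ t, (z t i) ^ 2 ≤ V t / cQ := by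
      intro t
      have h1 : cQ * (z t ⬝ᵥ z t) ≤ V t := by
        rw [hVval]; exact hQlow (z t)
      have h2 : (z t i) ^ 2 ≤ z t ⬝ᵥ z t := by
        rw [dotProduct]
        have : (z t i) ^ 2 = z t i * z t i := sq (z t i) ▸ by ring
        rw [this]
        exact Finset.single_le_sum (fun j _ => mul_self_nonneg (z t j)) (Finset.mem_univ i)
      rw [le_div_iff₀ hcQ]
      nlinarith
    have hup : Tendsto (fun t => V t / cQ) atTop (nhds 0) := by
      simpa using hVtends.div_const cQ
    refine tendsto_of_tendsto_of_tendsto_of_le_of_le' tendsto_const_nhds hup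
      (Eventually.of_forall fun t => sq_nonneg _) (Eventually.of_forall hb)
  have habs : Tendsto (fun t => |z t i|) atTop (nhds 0) := by
    have := hsq.sqrt
    simpa [Real.sqrt_sq_eq_abs] using this
  have := (tendsto_zero_iff_abs_tendsto_zero _).mpr habs
  simpa using this
end

section
/- Let n and r be positive natural numbers, let Ψ be a fixed n×r real matrix, and let Φ₀ be an n×r real matrix such that Ψᵀ * Φ₀ is invertible. Then the decoder map Φ ↦ Φ * (Ψᵀ * Φ)⁻¹, from n×r real matrices to n×r real matrices, has Fréchet derivative at Φ₀ given by the linear map δ ↦ (1 - Φ₀ * (Ψᵀ * Φ₀)⁻¹ * Ψᵀ) * δ * (Ψᵀ * Φ₀)⁻¹, where 1 denotes the n×n identity matrix. -/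
open Matrix Asymptotics Filter Topology

attribute [local instance] Matrix.normedAddCommGroup Matrix.normedSpace

lemma matrix_norm_mul_le' {m p q : Type*} [Fintype m] [Fintype p] [Fintype q]
    (A : Matrix m p ℝ) (B : Matrix p q ℝ) :
    ‖A * B‖ ≤ (Fintype.card p : ℝ) * ‖A‖ * ‖B‖ := by
  rw [Matrix.norm_le_iff (by positivity)]
  intro i j
  rw [Matrix.mul_apply]
  calc ‖∑ k, A i k * B k j‖ ≤ ∑ k, ‖A i k * B k j‖ := norm_sum_le _ _
    _ ≤ ∑ _k : p, ‖A‖ * ‖B‖ := Finset.sum_le_sum fun k _ => by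
        rw [norm_mul]
        exact mul_le_mul (Matrix.norm_entry_le_entrywise_sup_norm A)
          (Matrix.norm_entry_le_entrywise_sup_norm B) (norm_nonneg _) (norm_nonneg _)
    _ = (Fintype.card p : ℝ) * ‖A‖ * ‖B‖ := by
        rw [Finset.sum_const, Finset.card_univ, nsmul_eq_mul, mul_assoc]

/-- Fréchet derivative of the decoder map `Φ ↦ Φ * (Ψᵀ * Φ)⁻¹` at a point `Φ₀` where
`Ψᵀ * Φ₀` is invertible: the derivative is `δ ↦ (1 - Φ₀ (Ψᵀ Φ₀)⁻¹ Ψᵀ) δ (Ψᵀ Φ₀)⁻¹`. -/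
theorem stmt12 (n r : ℕ) (hn : 0 < n) (hr : 0 < r)
    (Ψ Φ₀ : Matrix (Fin n) (Fin r) ℝ) (h : IsUnit (Ψᵀ * Φ₀)) :
    ∃ L : Matrix (Fin n) (Fin r) ℝ →L[ℝ] Matrix (Fin n) (Fin r) ℝ,
      (∀ δ : Matrix (Fin n) (Fin r) ℝ,
        L δ = (1 - Φ₀ * (Ψᵀ * Φ₀)⁻¹ * Ψᵀ) * δ * (Ψᵀ * Φ₀)⁻¹) ∧
      HasFDerivAt (fun Φ : Matrix (Fin n) (Fin r) ℝ => Φ * (Ψᵀ * Φ)⁻¹) L Φ₀ := by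
  classical
  have hdet : IsUnit (Ψᵀ * Φ₀).det := (Matrix.isUnit_iff_isUnit_det _).1 h
  set A₀ := Ψᵀ * Φ₀ with hA₀def
  set P : Matrix (Fin n) (Fin n) ℝ := 1 - Φ₀ * A₀⁻¹ * Ψᵀ with hPdef
  let Llin : Matrix (Fin n) (Fin r) ℝ →ₗ[ℝ] Matrix (Fin n) (Fin r) ℝ :=
    { toFun := fun δ => P * δ * A₀⁻¹
      map_add' := fun x y => by simp [Matrix.mul_add, Matrix.add_mul]
      map_smul' := fun c x => by simp [Matrix.mul_smul, Matrix.smul_mul] }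
  refine ⟨LinearMap.toContinuousLinearMap Llin, fun δ => rfl, ?_⟩
  refine hasFDerivAt_iff_isLittleO_nhds_zero.2 ?_
  have hg : Continuous (fun hδ : Matrix (Fin n) (Fin r) ℝ => Ψᵀ * (Φ₀ + hδ)) :=
    continuous_const.matrix_mul (continuous_const.add continuous_id)
  have hcont : ContinuousAt (fun hδ : Matrix (Fin n) (Fin r) ℝ => (Ψᵀ * (Φ₀ + hδ))⁻¹) 0 := by
    have h1 : ContinuousAt Inv.inv (Ψᵀ * (Φ₀ + 0)) := by
      rw [add_zero]
      exact continuousAt_matrix_inv A₀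
        (by rw [Ring.inverse_eq_inv']; exact continuousAt_inv₀ hdet.ne_zero)
    exact ContinuousAt.comp (g := Inv.inv) (f := fun hδ => Ψᵀ * (Φ₀ + hδ)) h1 hg.continuousAt
  have htend : Tendsto (fun hδ : Matrix (Fin n) (Fin r) ℝ => ‖(Ψᵀ * (Φ₀ + hδ))⁻¹ - A₀⁻¹‖)
      (𝓝 0) (𝓝 0) := by
    have h2 : Tendsto (fun hδ : Matrix (Fin n) (Fin r) ℝ => (Ψᵀ * (Φ₀ + hδ))⁻¹ - A₀⁻¹)
        (𝓝 0) (𝓝 ((Ψᵀ * (Φ₀ + 0))⁻¹ - A₀⁻¹)) := hcont.sub continuousAt_const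
    simpa [hA₀def] using h2.norm
  have hev : ∀ᶠ hδ : Matrix (Fin n) (Fin r) ℝ in 𝓝 0, IsUnit (Ψᵀ * (Φ₀ + hδ)).det := by
    have hdc : ContinuousAt (fun hδ : Matrix (Fin n) (Fin r) ℝ => (Ψᵀ * (Φ₀ + hδ)).det) 0 :=
      (hg.matrix_det).continuousAt
    have h3 : ∀ᶠ hδ : Matrix (Fin n) (Fin r) ℝ in 𝓝 0, (Ψᵀ * (Φ₀ + hδ)).det ≠ 0 :=
      hdc.eventually_ne (by simpa using hdet.ne_zero)
    exact h3.mono fun x hx => isUnit_iff_ne_zero.2 hx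
  rw [isLittleO_iff]
  intro ε hε
  have hK : Tendsto (fun hδ : Matrix (Fin n) (Fin r) ℝ =>
      (r : ℝ) * ((n : ℝ) * ‖P‖) * ‖(Ψᵀ * (Φ₀ + hδ))⁻¹ - A₀⁻¹‖) (𝓝 0) (𝓝 0) := by
    simpa using htend.const_mul ((r : ℝ) * ((n : ℝ) * ‖P‖))
  filter_upwards [hev, hK.eventually (gt_mem_nhds hε)] with hδ hBu hKε
  set B := Ψᵀ * (Φ₀ + hδ) with hBdef
  have hL : (LinearMap.toContinuousLinearMap Llin) hδ = P * hδ * A₀⁻¹ := rfl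
  have e1 : Φ₀ * A₀⁻¹ * Ψᵀ * hδ = Φ₀ * A₀⁻¹ * B - Φ₀ := by
    have eB : B - A₀ = Ψᵀ * hδ := by
      rw [hBdef, hA₀def, Matrix.mul_add, add_sub_cancel_left]
    calc Φ₀ * A₀⁻¹ * Ψᵀ * hδ = Φ₀ * A₀⁻¹ * (Ψᵀ * hδ) := by rw [Matrix.mul_assoc]
      _ = Φ₀ * A₀⁻¹ * (B - A₀) := by rw [eB]
      _ = Φ₀ * A₀⁻¹ * B - Φ₀ * A₀⁻¹ * A₀ := by rw [Matrix.mul_sub]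
      _ = Φ₀ * A₀⁻¹ * B - Φ₀ := by rw [Matrix.nonsing_inv_mul_cancel_right _ _ hdet]
  have hP' : P * hδ = hδ - (Φ₀ * A₀⁻¹ * B - Φ₀) := by
    rw [hPdef, Matrix.sub_mul, Matrix.one_mul, e1]
  have hkey : (Φ₀ + hδ) * B⁻¹ - Φ₀ * A₀⁻¹ - P * hδ * A₀⁻¹ = P * hδ * (B⁻¹ - A₀⁻¹) := by
    rw [hP']
    simp only [Matrix.sub_mul, Matrix.add_mul, Matrix.mul_sub,
      Matrix.mul_nonsing_inv_cancel_right _ _ hBu]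
    abel
  change ‖(Φ₀ + hδ) * B⁻¹ - Φ₀ * A₀⁻¹ - P * hδ * A₀⁻¹‖ ≤ ε * ‖hδ‖
  rw [hkey]
  have h1 : ‖P * hδ‖ ≤ (n : ℝ) * ‖P‖ * ‖hδ‖ := by
    simpa using matrix_norm_mul_le' P hδ
  have h2 : ‖P * hδ * (B⁻¹ - A₀⁻¹)‖ ≤ (r : ℝ) * ‖P * hδ‖ * ‖B⁻¹ - A₀⁻¹‖ := by
    simpa [mul_comm, mul_left_comm] using matrix_norm_mul_le' (P * hδ) (B⁻¹ - A₀⁻¹)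
  have hr0 : (0:ℝ) ≤ (r : ℝ) := by positivity
  nlinarith [norm_nonneg hδ, norm_nonneg (B⁻¹ - A₀⁻¹), norm_nonneg P, norm_nonneg (P * hδ),
    hKε.le, mul_le_mul_of_nonneg_left h1 hr0,
    mul_le_mul_of_nonneg_right (mul_le_mul_of_nonneg_left h1 hr0) (norm_nonneg (B⁻¹ - A₀⁻¹))]
end

section
/- Let r be a positive natural number, let Q̃ and K₀ be fixed r×r real matrices with Q̃ symmetric, and let F : Matrix (Fin r) (Fin r) ℝ → ℝ be a function. Let R₀ be an r×r real matrix, set A₀ = (K₀ - K₀ᵀ - R₀ * R₀ᵀ) * Q̃, and suppose F has Fréchet derivative at A₀ given by δ ↦ ⟪G, δ⟫ for some r×r real matrix G, where ⟪M, N⟫ = trace(Mᵀ * N) is the Frobenius inner product. Then the composite map R ↦ F((K₀ - K₀ᵀ - R * Rᵀ) * Q̃) has Fréchet derivative at R₀ given by δ ↦ ⟪-(G * Q̃ + Q̃ * Gᵀ) * R₀, δ⟫; that is, its Frobenius gradient is ∇_R = -(G * Q̃ + Q̃ * Gᵀ) * R₀. -/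
open Matrix

attribute [local instance] Matrix.normedAddCommGroup Matrix.normedSpace

noncomputable def mulCLM (r : ℕ) :
    Matrix (Fin r) (Fin r) ℝ →L[ℝ] Matrix (Fin r) (Fin r) ℝ →L[ℝ] Matrix (Fin r) (Fin r) ℝ :=
  LinearMap.toContinuousLinearMap
    { toFun := fun A => LinearMap.toContinuousLinearMap (LinearMap.mulLeft ℝ A)
      map_add' := by intro A B; ext x; simp [add_mul]
      map_smul' := by intro c A; ext x; simp [smul_mul_assoc] }

lemma mulCLM_apply {r : ℕ} (A B : Matrix (Fin r) (Fin r) ℝ) : mulCLM r A B = A * B := rfl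

noncomputable def transCLM (r : ℕ) :
    Matrix (Fin r) (Fin r) ℝ →L[ℝ] Matrix (Fin r) (Fin r) ℝ :=
  LinearMap.toContinuousLinearMap
    { toFun := fun A => Aᵀ
      map_add' := by intro A B; simp
      map_smul' := by intro c A; simp }

lemma transCLM_apply {r : ℕ} (A : Matrix (Fin r) (Fin r) ℝ) : transCLM r A = Aᵀ := rfl

lemma hasFDerivAt_inner {r : ℕ} (Qt K₀ R₀ : Matrix (Fin r) (Fin r) ℝ) :
    HasFDerivAt (fun R : Matrix (Fin r) (Fin r) ℝ => (K₀ - K₀ᵀ - R * Rᵀ) * Qt)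
      (-((show Matrix (Fin r) (Fin r) ℝ →L[ℝ] Matrix (Fin r) (Fin r) ℝ from (mulCLM r).flip Qt).comp
        ((show Matrix (Fin r) (Fin r) ℝ →L[ℝ] Matrix (Fin r) (Fin r) ℝ from (mulCLM r).flip R₀ᵀ) + ((mulCLM r R₀).comp (transCLM r))))) R₀ := by
  have hb := (mulCLM r).isBoundedBilinearMap.hasFDerivAt (R₀, R₀ᵀ)
  have hp : HasFDerivAt (fun R : Matrix (Fin r) (Fin r) ℝ => (R, Rᵀ))
      ((ContinuousLinearMap.id ℝ _).prod (transCLM r)) R₀ :=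
    ((ContinuousLinearMap.id ℝ _).prod (transCLM r)).hasFDerivAt
  have h := ((show Matrix (Fin r) (Fin r) ℝ →L[ℝ] Matrix (Fin r) (Fin r) ℝ from
    (mulCLM r).flip Qt).hasFDerivAt).comp R₀ ((hb.comp R₀ hp).const_sub (K₀ - K₀ᵀ))
  refine HasFDerivAt.congr_fderiv (f := fun R : Matrix (Fin r) (Fin r) ℝ => (K₀ - K₀ᵀ - R * Rᵀ) * Qt) h ?_
  refine ContinuousLinearMap.ext fun δ => ?_
  show (-(R₀ * δᵀ + δ * R₀ᵀ)) * Qt = -((δ * R₀ᵀ + R₀ * δᵀ) * Qt)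
  rw [add_comm, Matrix.neg_mul]

/-- Chain rule for the parameterization `A(R) = (K₀ - K₀ᵀ - R Rᵀ) Q̃`: if `F` has Frobenius
gradient `G` at `A₀ = A(R₀)`, then `R ↦ F(A(R))` has Frobenius gradient
`-(G * Q̃ + Q̃ * Gᵀ) * R₀` at `R₀`. -/
theorem stmt15 (r : ℕ) (hr : 0 < r)
    (Qt K₀ : Matrix (Fin r) (Fin r) ℝ) (hQt : Qtᵀ = Qt)
    (F : Matrix (Fin r) (Fin r) ℝ → ℝ)
    (R₀ G : Matrix (Fin r) (Fin r) ℝ)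
    (L : Matrix (Fin r) (Fin r) ℝ →L[ℝ] ℝ)
    (hL : ∀ δ : Matrix (Fin r) (Fin r) ℝ, L δ = (Gᵀ * δ).trace)
    (hF : HasFDerivAt F L ((K₀ - K₀ᵀ - R₀ * R₀ᵀ) * Qt)) :
    ∃ L' : Matrix (Fin r) (Fin r) ℝ →L[ℝ] ℝ,
      (∀ δ : Matrix (Fin r) (Fin r) ℝ,
        L' δ = ((-((G * Qt + Qt * Gᵀ) * R₀))ᵀ * δ).trace) ∧
      HasFDerivAt (fun R : Matrix (Fin r) (Fin r) ℝ =>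
        F ((K₀ - K₀ᵀ - R * Rᵀ) * Qt)) L' R₀ := by
  set D : Matrix (Fin r) (Fin r) ℝ →L[ℝ] Matrix (Fin r) (Fin r) ℝ :=
    -((show Matrix (Fin r) (Fin r) ℝ →L[ℝ] Matrix (Fin r) (Fin r) ℝ from (mulCLM r).flip Qt).comp
        ((show Matrix (Fin r) (Fin r) ℝ →L[ℝ] Matrix (Fin r) (Fin r) ℝ from (mulCLM r).flip R₀ᵀ) + ((mulCLM r R₀).comp (transCLM r)))) with hD
  refine ⟨L.comp D, ?_, hF.comp R₀ (hasFDerivAt_inner Qt K₀ R₀)⟩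
  intro δ
  have hDδ : D δ = -((δ * R₀ᵀ + R₀ * δᵀ) * Qt) := rfl
  rw [ContinuousLinearMap.comp_apply, hDδ, hL]
  have e1 : (Gᵀ * (δ * R₀ᵀ * Qt)).trace = ((R₀ᵀ * (Qt * Gᵀ)) * δ).trace := by
    rw [trace_mul_comm, Matrix.mul_assoc, Matrix.mul_assoc, trace_mul_comm,
      Matrix.mul_assoc]
  have e2 : (Gᵀ * (R₀ * δᵀ * Qt)).trace = ((R₀ᵀ * (G * Qt)) * δ).trace := by
    rw [← trace_transpose (Gᵀ * (R₀ * δᵀ * Qt))]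
    simp only [transpose_mul, transpose_transpose, hQt]
    rw [Matrix.mul_assoc, Matrix.mul_assoc, trace_mul_comm, Matrix.mul_assoc,
      Matrix.mul_assoc, trace_mul_comm]
  calc (Gᵀ * -((δ * R₀ᵀ + R₀ * δᵀ) * Qt)).trace
      = -((Gᵀ * (δ * R₀ᵀ * Qt)).trace + (Gᵀ * (R₀ * δᵀ * Qt)).trace) := by
        simp [mul_neg, add_mul, mul_add, trace_add]
    _ = ((-((G * Qt + Qt * Gᵀ) * R₀))ᵀ * δ).trace := by
        rw [e1, e2]
        simp only [transpose_neg, transpose_mul, transpose_add, hQt, transpose_transpose,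
          Matrix.neg_mul, trace_neg, Matrix.add_mul, Matrix.mul_add, trace_add]
end
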